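/- arXiv:1708.06934 — 6 statements merged into one kernel-verified Lean document; each statement's English description precedes it below -/
import Mathlib

section
/- (Green's formula) Let (X,b,m) be a weighted graph, θ a magnetic potential and v an electric potential on X. Then for every f ∈ C̃(X) and every g ∈ C_c(X), all of the following sums converge absolutely and one has ∑_{x∈X} (L̃_{v,θ}f)(x)·conj(g(x))·m(x) = ∑_{x∈X} f(x)·conj((L̃_{v,θ}g)(x))·m(x) = (1/2)∑_{x,y∈X} b(x,y)(f(x) − e^{iθ(x,y)}f(y))·conj(g(x) − e^{iθ(x,y)}g(y)) + ∑_{x∈X} v(x)f(x)·conj(g(x))·m(x). -/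
open Complex

/-- The formal magnetic Schrödinger operator `L̃_{v,θ}` on a weighted graph `(X,b,m)`:
`(L̃_{v,θ} f)(x) = (1/m(x)) ∑_y b(x,y)(f(x) - e^{iθ(x,y)} f(y)) + v(x) f(x)`. -/
noncomputable def magneticSchrodingerOp {X : Type*} (b : X → X → ℝ) (m : X → ℝ)
    (θ : X → X → ℝ) (v : X → ℝ) (f : X → ℂ) : X → ℂ := fun x =>
  (m x)⁻¹ * (∑' y, (b x y : ℂ) * (f x - Complex.exp (Complex.I * (θ x y)) * f y))
    + (v x) * f x

set_option maxHeartbeats 1000000 in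
/-- **Green's formula** for the formal magnetic Schrödinger operator. -/
theorem greens_formula {X : Type*} [Countable X]
    (b : X → X → ℝ) (m : X → ℝ) (θ : X → X → ℝ) (v : X → ℝ)
    (hb_symm : ∀ x y, b x y = b y x) (hb_nonneg : ∀ x y, 0 ≤ b x y)
    (hb_diag : ∀ x, b x x = 0) (hb_sum : ∀ x, Summable fun y => b x y)
    (hm : ∀ x, 0 < m x) (hθ : ∀ x y, θ x y = - θ y x)
    (f g : X → ℂ)
    (hf : ∀ x, Summable fun y => b x y * ‖f y‖)
    (hg : (Function.support g).Finite) :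
    -- absolute convergence of all the sums involved:
    (Summable fun x =>
      ‖magneticSchrodingerOp b m θ v f x * (starRingEnd ℂ) (g x) * (m x)‖) ∧
    (Summable fun x =>
      ‖f x * (starRingEnd ℂ) (magneticSchrodingerOp b m θ v g x) * (m x)‖) ∧
    (Summable fun p : X × X =>
      ‖(b p.1 p.2 : ℂ) * (f p.1 - Complex.exp (Complex.I * (θ p.1 p.2)) * f p.2) *
        (starRingEnd ℂ) (g p.1 - Complex.exp (Complex.I * (θ p.1 p.2)) * g p.2)‖) ∧
    (Summable fun x => ‖v x * f x * (starRingEnd ℂ) (g x) * (m x)‖) ∧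
    -- the equalities:
    (∑' x, magneticSchrodingerOp b m θ v f x * (starRingEnd ℂ) (g x) * (m x)
      = ∑' x, f x * (starRingEnd ℂ) (magneticSchrodingerOp b m θ v g x) * (m x)) ∧
    (∑' x, magneticSchrodingerOp b m θ v f x * (starRingEnd ℂ) (g x) * (m x)
      = (1/2) * (∑' p : X × X,
          (b p.1 p.2 : ℂ) * (f p.1 - Complex.exp (Complex.I * (θ p.1 p.2)) * f p.2) *
            (starRingEnd ℂ) (g p.1 - Complex.exp (Complex.I * (θ p.1 p.2)) * g p.2))
        + ∑' x, v x * f x * (starRingEnd ℂ) (g x) * (m x)) := by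
  classical
  have hm0 : ∀ x, (m x : ℂ) ≠ 0 := fun x => by exact_mod_cast (hm x).ne'
  have hEn : ∀ x y, ‖Complex.exp (Complex.I * (θ x y))‖ = 1 := fun x y => by
    simp [Complex.norm_exp]
  have hEc : ∀ x y, (starRingEnd ℂ) (Complex.exp (Complex.I * (θ x y)))
      = Complex.exp (Complex.I * (θ y x)) := by
    intro x y
    rw [← Complex.exp_conj]
    congr 1
    simp only [map_mul, Complex.conj_I, Complex.conj_ofReal, hθ y x, Complex.ofReal_neg]
    ring
  have hEm : ∀ x y, Complex.exp (Complex.I * (θ x y)) * Complex.exp (Complex.I * (θ y x)) = 1 := by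
    intro x y
    rw [← Complex.exp_add, ← Complex.exp_zero]
    congr 1
    rw [hθ y x]
    push_cast
    ring
  set s : Finset X := hg.toFinset with hsdef
  have hg0 : ∀ x, x ∉ s → g x = 0 := by
    intro x hx
    by_contra h
    exact hx (hg.mem_toFinset.2 h)
  have hf' : ∀ x, Summable fun y => b x y * ‖f y‖ := by
    intro x
    simpa using hf x
  have hbx : ∀ y, Summable fun x => b x y := fun y => (hb_sum y).congr fun x => hb_symm y x
  -- the four basic nonnegative majorants on X × X
  set P1 : X × X → ℝ := fun p => b p.1 p.2 * ‖f p.1‖ * ‖g p.1‖ with hP1def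
  set P2 : X × X → ℝ := fun p => b p.1 p.2 * ‖f p.1‖ * ‖g p.2‖ with hP2def
  set P3 : X × X → ℝ := fun p => b p.1 p.2 * ‖f p.2‖ * ‖g p.1‖ with hP3def
  set P4 : X × X → ℝ := fun p => b p.1 p.2 * ‖f p.2‖ * ‖g p.2‖ with hP4def
  have hnn : ∀ (u w : X → ℂ) (p : X × X), 0 ≤ b p.1 p.2 * ‖u p.1‖ * ‖w p.2‖ :=
    fun u w p => mul_nonneg (mul_nonneg (hb_nonneg _ _) (norm_nonneg _)) (norm_nonneg _)
  have hP1 : Summable P1 := by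
    rw [hP1def]
    refine (summable_prod_of_nonneg (fun p =>
      mul_nonneg (mul_nonneg (hb_nonneg _ _) (norm_nonneg _)) (norm_nonneg _))).2
      ⟨fun x => ?_, ?_⟩
    · dsimp only
      exact ((hb_sum x).mul_right _).mul_right _
    · refine summable_of_ne_finset_zero (s := s) fun x hx => ?_
      simp [hg0 x hx]
  have hP3 : Summable P3 := by
    rw [hP3def]
    refine (summable_prod_of_nonneg (fun p =>
      mul_nonneg (mul_nonneg (hb_nonneg _ _) (norm_nonneg _)) (norm_nonneg _))).2
      ⟨fun x => ?_, ?_⟩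
    · dsimp only
      exact (hf' x).mul_right _
    · refine summable_of_ne_finset_zero (s := s) fun x hx => ?_
      simp [hg0 x hx]
  have hP4 : Summable P4 := by
    rw [hP4def]
    refine (summable_prod_of_nonneg (fun p =>
      mul_nonneg (mul_nonneg (hb_nonneg _ _) (norm_nonneg _)) (norm_nonneg _))).2
      ⟨fun x => ?_, ?_⟩
    · refine summable_of_ne_finset_zero (s := s) fun y hy => ?_
      simp [hg0 y hy]
    · refine Summable.congr (f := fun x => ∑ y ∈ s, b x y * ‖f y‖ * ‖g y‖)
        (summable_sum fun y _ => ((hbx y).mul_right _).mul_right _) fun x => ?_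
      dsimp only
      exact (tsum_eq_sum fun y hy => by simp [hg0 y hy]).symm
  have hP2 : Summable P2 := by
    have h := (Equiv.prodComm X X).summable_iff.2 hP3
    refine h.congr fun p => ?_
    simp only [Function.comp, hP2def, hP3def, Equiv.prodComm_apply, Prod.fst_swap, Prod.snd_swap]
    rw [hb_symm p.2 p.1]
  -- complex-valued summands
  set F1 : X × X → ℂ := fun p => (b p.1 p.2 : ℂ) *
      (f p.1 - Complex.exp (Complex.I * (θ p.1 p.2)) * f p.2) * (starRingEnd ℂ) (g p.1)
    with hF1def
  set F2 : X × X → ℂ := fun p => (b p.1 p.2 : ℂ) * f p.1 *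
      (starRingEnd ℂ) (g p.1 - Complex.exp (Complex.I * (θ p.1 p.2)) * g p.2) with hF2def
  set FQ : X × X → ℂ := fun p => (b p.1 p.2 : ℂ) *
      (f p.1 - Complex.exp (Complex.I * (θ p.1 p.2)) * f p.2) *
      (starRingEnd ℂ) (g p.1 - Complex.exp (Complex.I * (θ p.1 p.2)) * g p.2) with hFQdef
  set T : X × X → ℂ := fun p => (b p.1 p.2 : ℂ) *
      (f p.1 - Complex.exp (Complex.I * (θ p.1 p.2)) * f p.2) *
      (starRingEnd ℂ) (Complex.exp (Complex.I * (θ p.1 p.2)) * g p.2) with hTdef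
  set S1 : X × X → ℂ := fun p => (b p.1 p.2 : ℂ) *
      (Complex.exp (Complex.I * (θ p.1 p.2)) * f p.2) * (starRingEnd ℂ) (g p.1) with hS1def
  set S2 : X × X → ℂ := fun p => (b p.1 p.2 : ℂ) * f p.1 *
      (starRingEnd ℂ) (Complex.exp (Complex.I * (θ p.1 p.2)) * g p.2) with hS2def
  have hnorm : ∀ (x y : X) (u w : ℂ),
      ‖(b x y : ℂ) * u * (starRingEnd ℂ) w‖ = b x y * ‖u‖ * ‖w‖ := by
    intro x y u w
    simp [_root_.abs_of_nonneg (hb_nonneg x y)]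
  -- norm bounds
  have hF1n : ∀ p, ‖F1 p‖ ≤ P1 p + P3 p := by
    intro p
    have h : F1 p = (b p.1 p.2 : ℂ) * f p.1 * (starRingEnd ℂ) (g p.1)
        - (b p.1 p.2 : ℂ) * (Complex.exp (Complex.I * (θ p.1 p.2)) * f p.2) *
          (starRingEnd ℂ) (g p.1) := by
      simp only [hF1def]; ring
    rw [h]
    refine (norm_sub_le _ _).trans ?_
    simp only [hP1def, hP3def, hnorm, norm_mul, hEn, one_mul, le_refl]
  have hF2n : ∀ p, ‖F2 p‖ ≤ P1 p + P2 p := by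
    intro p
    have h : F2 p = (b p.1 p.2 : ℂ) * f p.1 * (starRingEnd ℂ) (g p.1)
        - (b p.1 p.2 : ℂ) * f p.1 *
          (starRingEnd ℂ) (Complex.exp (Complex.I * (θ p.1 p.2)) * g p.2) := by
      simp only [hF2def, map_sub]; ring
    rw [h]
    refine (norm_sub_le _ _).trans ?_
    simp only [hP1def, hP2def, hnorm, norm_mul, hEn, one_mul, le_refl]
  have hTn : ∀ p, ‖T p‖ ≤ P2 p + P4 p := by
    intro p
    have h : T p = (b p.1 p.2 : ℂ) * f p.1 *
          (starRingEnd ℂ) (Complex.exp (Complex.I * (θ p.1 p.2)) * g p.2)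
        - (b p.1 p.2 : ℂ) * (Complex.exp (Complex.I * (θ p.1 p.2)) * f p.2) *
          (starRingEnd ℂ) (Complex.exp (Complex.I * (θ p.1 p.2)) * g p.2) := by
      simp only [hTdef]; ring
    rw [h]
    refine (norm_sub_le _ _).trans ?_
    simp only [hP2def, hP4def, hnorm, norm_mul, hEn, one_mul, le_refl]
  have hS1n : ∀ p, ‖S1 p‖ ≤ P3 p := by
    intro p
    simp only [hS1def, hP3def, hnorm, norm_mul, hEn, one_mul, le_refl]
  have hS2n : ∀ p, ‖S2 p‖ ≤ P2 p := by
    intro p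
    simp only [hS2def, hP2def, hnorm, norm_mul, hEn, one_mul, le_refl]
  have hFQ_split : ∀ p, FQ p = F1 p - T p := by
    intro p
    simp only [hFQdef, hF1def, hTdef, map_sub]
    ring
  have hFQn : ∀ p, ‖FQ p‖ ≤ P1 p + P3 p + (P2 p + P4 p) := by
    intro p
    rw [hFQ_split p]
    exact (norm_sub_le _ _).trans (add_le_add (hF1n p) (hTn p))
  -- summability of the complex summands
  have hF1s : Summable F1 := Summable.of_norm_bounded (hP1.add hP3) hF1n
  have hF2s : Summable F2 := Summable.of_norm_bounded (hP1.add hP2) hF2n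
  have hTs : Summable T := Summable.of_norm_bounded (hP2.add hP4) hTn
  have hFQs : Summable FQ := Summable.of_norm_bounded ((hP1.add hP3).add (hP2.add hP4)) hFQn
  have hS1s : Summable S1 := Summable.of_norm_bounded hP3 hS1n
  have hS2s : Summable S2 := Summable.of_norm_bounded hP2 hS2n
  -- swap identities
  have hswap : ∑' p : X × X, S1 p = ∑' p : X × X, S2 p := by
    rw [← (Equiv.prodComm X X).tsum_eq S1]
    refine tsum_congr fun p => ?_
    simp only [hS1def, hS2def, Equiv.prodComm_apply, Prod.fst_swap, Prod.snd_swap, map_mul, hEc,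
      hb_symm p.2 p.1]
    ring
  have hTswap : ∑' p : X × X, T p = - ∑' p : X × X, F1 p := by
    rw [← (Equiv.prodComm X X).tsum_eq T, ← tsum_neg]
    refine tsum_congr fun p => ?_
    simp only [hTdef, hF1def, Equiv.prodComm_apply, Prod.fst_swap, Prod.snd_swap, map_mul, hEc,
      hb_symm p.2 p.1]
    linear_combination (-(b p.1 p.2 : ℂ) * (starRingEnd ℂ) (g p.1) * f p.1) * hEm p.1 p.2
  -- outer summability helper
  have houter : ∀ (F : X × X → ℂ) (P : X × X → ℝ), Summable P → (∀ p, ‖F p‖ ≤ P p) →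
      Summable fun x => ‖∑' y, F (x, y)‖ := by
    intro F P hPs hle
    have hP0 : ∀ p : X × X, (0 : ℝ) ≤ P p := fun p => le_trans (norm_nonneg _) (hle p)
    have h2 := ((summable_prod_of_nonneg fun p => hP0 p).1 hPs).2
    refine Summable.of_nonneg_of_le (fun x => norm_nonneg _) (fun x => ?_) h2
    have hx : Summable fun y => ‖F (x, y)‖ :=
      Summable.of_nonneg_of_le (fun y => norm_nonneg _) (fun y => hle (x, y)) (hPs.prod_factor x)
    calc ‖∑' y, F (x, y)‖ ≤ ∑' y, ‖F (x, y)‖ := norm_tsum_le_tsum_norm hx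
      _ ≤ ∑' y, P (x, y) := Summable.tsum_le_tsum (fun y => hle (x, y)) hx (hPs.prod_factor x)
  have hA1 : Summable fun x => ∑' y, F1 (x, y) :=
    (houter F1 _ (hP1.add hP3) hF1n).of_norm
  have hA2 : Summable fun x => ∑' y, F2 (x, y) :=
    (houter F2 _ (hP1.add hP2) hF2n).of_norm
  have hVsum : Summable fun x => v x * f x * (starRingEnd ℂ) (g x) * (m x : ℂ) :=
    summable_of_ne_finset_zero (s := s) fun x hx => by simp [hg0 x hx]
  -- conj of a tsum
  have hconj_tsum : ∀ (h : X → ℂ),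
      (starRingEnd ℂ) (∑' y, h y) = ∑' y, (starRingEnd ℂ) (h y) := by
    intro h
    simpa only [starRingEnd_apply] using tsum_star (f := h)
  -- pointwise identities
  have hptL : ∀ x, magneticSchrodingerOp b m θ v f x * (starRingEnd ℂ) (g x) * (m x : ℂ)
      = (∑' y, F1 (x, y)) + v x * f x * (starRingEnd ℂ) (g x) * (m x : ℂ) := by
    intro x
    have h1 : (∑' y, F1 (x, y)) =
        (∑' y, (b x y : ℂ) * (f x - Complex.exp (Complex.I * (θ x y)) * f y)) *
          (starRingEnd ℂ) (g x) := by
      simp only [hF1def]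
      exact tsum_mul_right
    simp only [magneticSchrodingerOp]
    rw [h1]
    have hmm : (((m x)⁻¹ : ℝ) : ℂ) * (m x : ℂ) = 1 := by
      push_cast; exact inv_mul_cancel₀ (hm0 x)
    linear_combination ((∑' y, (b x y : ℂ) * (f x - Complex.exp (Complex.I * (θ x y)) * f y)) *
      (starRingEnd ℂ) (g x)) * hmm
  have hptM : ∀ x, f x * (starRingEnd ℂ) (magneticSchrodingerOp b m θ v g x) * (m x : ℂ)
      = (∑' y, F2 (x, y)) + v x * f x * (starRingEnd ℂ) (g x) * (m x : ℂ) := by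
    intro x
    have h1 : (starRingEnd ℂ)
        (∑' y, (b x y : ℂ) * (g x - Complex.exp (Complex.I * (θ x y)) * g y))
        = ∑' y, (b x y : ℂ) *
            (starRingEnd ℂ) (g x - Complex.exp (Complex.I * (θ x y)) * g y) := by
      rw [hconj_tsum]
      exact tsum_congr fun y => by rw [map_mul, Complex.conj_ofReal]
    have h2 : (∑' y, F2 (x, y)) = f x *
        ∑' y, (b x y : ℂ) * (starRingEnd ℂ) (g x - Complex.exp (Complex.I * (θ x y)) * g y) := by
      rw [← tsum_mul_left]
      exact tsum_congr fun y => by simp only [hF2def]; ring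
    simp only [magneticSchrodingerOp]
    rw [map_add, map_mul, h1, Complex.conj_ofReal, map_mul, Complex.conj_ofReal, h2]
    have hmm : (((m x)⁻¹ : ℝ) : ℂ) * (m x : ℂ) = 1 := by
      push_cast; exact inv_mul_cancel₀ (hm0 x)
    linear_combination (f x * ∑' y, (b x y : ℂ) *
      (starRingEnd ℂ) (g x - Complex.exp (Complex.I * (θ x y)) * g y)) * hmm
  -- the two iterated sums
  have hL : (∑' x, magneticSchrodingerOp b m θ v f x * (starRingEnd ℂ) (g x) * (m x : ℂ))
      = (∑' p : X × X, F1 p) + ∑' x, v x * f x * (starRingEnd ℂ) (g x) * (m x : ℂ) := by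
    rw [tsum_congr hptL, Summable.tsum_add hA1 hVsum]
    congr 1
    exact (Summable.tsum_prod' hF1s fun x => hF1s.prod_factor x).symm
  have hM : (∑' x, f x * (starRingEnd ℂ) (magneticSchrodingerOp b m θ v g x) * (m x : ℂ))
      = (∑' p : X × X, F2 p) + ∑' x, v x * f x * (starRingEnd ℂ) (g x) * (m x : ℂ) := by
    rw [tsum_congr hptM, Summable.tsum_add hA2 hVsum]
    congr 1
    exact (Summable.tsum_prod' hF2s fun x => hF2s.prod_factor x).symm
  have hF1F2 : ∑' p : X × X, F1 p = ∑' p : X × X, F2 p := by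
    have hpt : ∀ p : X × X, F1 p = F2 p + (S2 p - S1 p) := by
      intro p
      simp only [hF1def, hF2def, hS1def, hS2def, map_sub]
      ring
    rw [tsum_congr hpt, Summable.tsum_add hF2s (hS2s.sub hS1s), Summable.tsum_sub hS2s hS1s, ← hswap, sub_self,
      add_zero]
  have hQ : ∑' p : X × X, FQ p = 2 * ∑' p : X × X, F1 p := by
    rw [tsum_congr hFQ_split, Summable.tsum_sub hF1s hTs, hTswap]
    ring
  refine ⟨?_, ?_, ?_, ?_, ?_, ?_⟩
  · exact summable_of_ne_finset_zero (s := s) fun x hx => by simp [hg0 x hx]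
  · refine Summable.of_nonneg_of_le (fun x => norm_nonneg _) (fun x => ?_)
      (((houter F2 _ (hP1.add hP2) hF2n)).add
        (summable_of_ne_finset_zero (s := s)
          (f := fun x => ‖v x * f x * (starRingEnd ℂ) (g x) * (m x : ℂ)‖)
          fun x hx => by simp [hg0 x hx]))
    rw [hptM x]
    exact norm_add_le _ _
  · exact Summable.of_nonneg_of_le (fun p => norm_nonneg _) (fun p => hFQn p)
      ((hP1.add hP3).add (hP2.add hP4))
  · exact summable_of_ne_finset_zero (s := s) fun x hx => by simp [hg0 x hx]
  · rw [hL, hM, hF1F2]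
  · rw [hL, hQ]
    ring
end

section
/- (Kato–Simon estimate, finite graphs) Let (X,b,m) be a weighted graph with X finite, θ a magnetic potential and v an electric potential on X. Then for all t ≥ 0 and all x,y ∈ X one has |exp(−itL_{v,θ})(x,y)| ≤ exp(−tL_{−deg,0})(x,y), where L_{−deg,0} is the operator obtained by replacing v by −deg and θ by 0. -/
open NormedSpace Nat
set_option linter.unusedSectionVars false
set_option maxHeartbeats 1000000
section KatoSimonAux

theorem my_abs_one_add (z : ℂ) (hz : z.re = 0) :
    ‖(1 + z)‖ ≤ 1 + (‖z‖) ^ 2 / 2 := by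
  have h1 : (‖z‖) ^ 2 = z.im * z.im := by
    rw [Complex.sq_norm, Complex.normSq_apply, hz]; ring
  rw [Complex.norm_def, Complex.normSq_apply]
  have h2 : (1 + z).re = 1 := by simp [hz]
  have h3 : (1 + z).im = z.im := by simp
  rw [h2, h3, h1]
  have h4 : (1:ℝ) * 1 + z.im * z.im ≤ (1 + z.im * z.im / 2) ^ 2 := by nlinarith [sq_nonneg (z.im * z.im)]
  calc Real.sqrt (1 * 1 + z.im * z.im) ≤ Real.sqrt ((1 + z.im * z.im / 2) ^ 2) :=
        Real.sqrt_le_sqrt h4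
    _ = 1 + z.im * z.im / 2 := Real.sqrt_sq (by nlinarith [mul_self_nonneg z.im])

theorem my_exp_add_le (u v : ℝ) (hu : 0 ≤ u) (hv : 0 ≤ v) :
    Real.exp u + v ≤ Real.exp (u + v) := by
  rw [Real.exp_add]
  nlinarith [mul_le_mul_of_nonneg_left (Real.add_one_le_exp v) (le_of_lt (Real.exp_pos u)),
    mul_le_mul_of_nonneg_right (Real.one_le_exp hu) hv]

section GeneralAlg

section GeneralAlg
variable {𝔸 : Type*} [NormedRing 𝔸] [NormOneClass 𝔸] [NormedAlgebra ℝ 𝔸] [CompleteSpace 𝔸]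

theorem aux_term_norm' {𝕂 : Type*} [RCLike 𝕂] {𝔹 : Type*} [NormedRing 𝔹] [NormOneClass 𝔹]
    [NormedAlgebra 𝕂 𝔹] (x : 𝔹) (n : ℕ) : ‖((n ! : 𝕂))⁻¹ • x ^ n‖ ≤ ‖x‖ ^ n / n ! := by
  rw [norm_smul, norm_inv, div_eq_inv_mul, RCLike.norm_natCast]
  gcongr
  exact norm_pow_le x n

theorem my_norm_exp_le {𝕂 : Type*} [RCLike 𝕂] {𝔹 : Type*} [NormedRing 𝔹] [NormOneClass 𝔹]
    [NormedAlgebra 𝕂 𝔹] [CompleteSpace 𝔹] (x : 𝔹) : ‖exp x‖ ≤ Real.exp ‖x‖ := by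
  rw [exp_eq_tsum 𝕂]
  refine (norm_tsum_le_tsum_norm (norm_expSeries_summable' (𝕂 := 𝕂) x)).trans ?_
  rw [Real.exp_eq_exp_ℝ, exp_eq_tsum_div]
  exact Summable.tsum_le_tsum (aux_term_norm' x) (norm_expSeries_summable' (𝕂 := 𝕂) x)
    (Real.summable_pow_div_factorial ‖x‖)

theorem my_exp_remainder {𝕂 : Type*} [RCLike 𝕂] {𝔹 : Type*} [NormedRing 𝔹] [NormOneClass 𝔹]
    [NormedAlgebra 𝕂 𝔹] [CompleteSpace 𝔹] (x : 𝔹) :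
    ‖exp x - 1 - x‖ ≤ ‖x‖ ^ 2 * Real.exp ‖x‖ := by
  have hs := expSeries_summable' (𝕂 := 𝕂) x
  have hs1 : Summable fun n => ((((n + 1) ! : 𝕂)))⁻¹ • x ^ (n + 1) :=
    (summable_nat_add_iff 1).2 hs
  have hexp : exp x = 1 + (x + ∑' n : ℕ, (((n + 2)! : 𝕂))⁻¹ • x ^ (n + 2)) := by
    simp only [exp_eq_tsum 𝕂]
    rw [Summable.tsum_eq_zero_add hs, Summable.tsum_eq_zero_add hs1]
    norm_num
  rw [hexp]
  have h1 : (1 : 𝔹) + (x + ∑' n : ℕ, (((n + 2)! : 𝕂))⁻¹ • x ^ (n + 2)) - 1 - x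
      = ∑' n : ℕ, (((n + 2)! : 𝕂))⁻¹ • x ^ (n + 2) := by abel
  rw [h1]
  have hns : Summable fun n : ℕ => ‖(((n + 2)! : 𝕂))⁻¹ • x ^ (n + 2)‖ :=
    (summable_nat_add_iff 2).2 (norm_expSeries_summable' (𝕂 := 𝕂) x)
  refine (norm_tsum_le_tsum_norm hns).trans ?_
  have hbd : ∀ n : ℕ, ‖(((n + 2)! : 𝕂))⁻¹ • x ^ (n + 2)‖ ≤ ‖x‖ ^ 2 * (‖x‖ ^ n / n !) := by
    intro n
    refine (aux_term_norm' x (n + 2)).trans ?_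
    rw [pow_add, mul_comm (‖x‖ ^ n), mul_div_assoc]
    gcongr
    omega
  refine (Summable.tsum_le_tsum hbd hns ((Real.summable_pow_div_factorial ‖x‖).mul_left _)).trans ?_
  rw [tsum_mul_left, Real.exp_eq_exp_ℝ, exp_eq_tsum_div]

theorem my_pow_diff (P Q : 𝔸) (c : ℝ) (hc1 : 1 ≤ c) (hc : ‖P‖ + ‖Q‖ ≤ c) (n : ℕ) :
    ‖(P + Q) ^ n - P ^ n‖ ≤ n * ‖Q‖ * c ^ n := by
  induction n with
  | zero => simp
  | succ n ih =>
    have hid : (P + Q) ^ (n + 1) - P ^ (n + 1)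
        = ((P + Q) ^ n - P ^ n) * (P + Q) + P ^ n * Q := by
      rw [pow_succ, pow_succ]; noncomm_ring
    have hPc : ‖P‖ ≤ c := le_trans (le_add_of_nonneg_right (norm_nonneg Q)) hc
    have hc0 : (0:ℝ) ≤ c := le_trans zero_le_one hc1
    calc ‖(P + Q) ^ (n + 1) - P ^ (n + 1)‖
        ≤ ‖((P + Q) ^ n - P ^ n) * (P + Q)‖ + ‖P ^ n * Q‖ := by rw [hid]; exact norm_add_le _ _
      _ ≤ (n * ‖Q‖ * c ^ n) * c + c ^ n * ‖Q‖ := by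
          refine add_le_add ?_ ?_
          · exact (norm_mul_le _ _).trans (mul_le_mul ih ((norm_add_le _ _).trans hc)
              (norm_nonneg _) (by positivity))
          · exact (norm_mul_le _ _).trans (mul_le_mul ((norm_pow_le _ _).trans
              (pow_le_pow_left₀ (norm_nonneg _) hPc n)) le_rfl (norm_nonneg _) (by positivity))
      _ ≤ (n + 1 : ℕ) * ‖Q‖ * c ^ (n + 1) := by
          push_cast
          have h1 : (0:ℝ) ≤ ‖Q‖ := norm_nonneg _
          have h2 : (0:ℝ) ≤ c ^ n := by positivity
          have h4 : c ^ (n+1) = c ^ n * c := pow_succ c n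
          have h5 : ‖Q‖ * c ^ n ≤ ‖Q‖ * c ^ n * c := le_mul_of_one_le_right (by positivity) hc1
          rw [h4]; nlinarith [h5]
end GeneralAlg

section MatrixAux
variable {X : Type*} [Fintype X] [DecidableEq X] [Nonempty X]

attribute [local instance] Matrix.linftyOpSemiNormedRing Matrix.linftyOpNormedRing Matrix.linftyOpNormedAlgebra

-- entry bounded by linfty operator norm
theorem my_entry_norm_le {α : Type*} [SeminormedRing α] (M : Matrix X X α) (i j : X) :
    ‖M i j‖ ≤ ‖M‖ := by
  have h : ‖M i j‖₊ ≤ ‖M‖₊ := by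
    rw [Matrix.linfty_opNNNorm_def]
    exact le_trans (Finset.single_le_sum (f := fun k => ‖M i k‖₊)
      (fun _ _ => _root_.zero_le) (Finset.mem_univ j)) (Finset.le_sup (f := fun i => ∑ k : X, ‖M i k‖₊) (Finset.mem_univ i))
  exact_mod_cast h

theorem my_pow_entry_nonneg (B : Matrix X X ℝ) (hB : ∀ i j, 0 ≤ B i j) (n : ℕ) (i j : X) :
    0 ≤ (B ^ n) i j := by
  induction n generalizing i j with
  | zero => by_cases h : i = j <;> simp [pow_zero, Matrix.one_apply, h]
  | succ n ih =>
    rw [pow_succ, Matrix.mul_apply]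
    exact Finset.sum_nonneg fun k _ => mul_nonneg (ih i k) (hB k j)

theorem my_entry_hasSum (B : Matrix X X ℝ) (i j : X) :
    HasSum (fun n : ℕ => ((n ! : ℝ))⁻¹ * (B ^ n) i j) ((exp B) i j) := by
  have h : HasSum (fun n : ℕ => ((n ! : ℝ))⁻¹ • B ^ n) (exp B) := by
    rw [exp_eq_tsum ℝ]
    exact (expSeries_summable' (𝕂 := ℝ) B).hasSum
  have h1 := (Pi.hasSum.mp ((Pi.hasSum (f := fun n : ℕ => ((n ! : ℝ))⁻¹ • B ^ n)).mp h i)) j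
  simpa [Matrix.smul_apply] using h1

theorem my_exp_entry_ge (B : Matrix X X ℝ) (hB : ∀ i j, 0 ≤ B i j) (i j : X) :
    (1 : Matrix X X ℝ) i j + B i j ≤ (exp B) i j := by
  have h := my_entry_hasSum B i j
  have h2 := sum_le_hasSum ({0, 1} : Finset ℕ)
    (fun n _ => mul_nonneg (by positivity) (my_pow_entry_nonneg B hB n i j)) h
  calc (1 : Matrix X X ℝ) i j + B i j
      = ∑ n ∈ ({0, 1} : Finset ℕ), ((n ! : ℝ))⁻¹ * (B ^ n) i j := by
        rw [Finset.sum_insert (by norm_num), Finset.sum_singleton]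
        simp [Nat.factorial]
    _ ≤ (exp B) i j := h2

theorem my_abs_pow_entry_le (P : Matrix X X ℂ) (Q : Matrix X X ℝ)
    (h : ∀ i j, ‖(P i j)‖ ≤ Q i j) (n : ℕ) (i j : X) :
    ‖((P ^ n) i j)‖ ≤ (Q ^ n) i j := by
  induction n generalizing i j with
  | zero => by_cases hij : i = j <;> simp [pow_zero, Matrix.one_apply, hij]
  | succ n ih =>
    rw [pow_succ, pow_succ, Matrix.mul_apply, Matrix.mul_apply]
    refine (norm_sum_le _ _).trans (Finset.sum_le_sum fun k _ => ?_)
    rw [norm_mul]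
    exact mul_le_mul (ih i k) (h k j) (norm_nonneg _)
      (le_trans (norm_nonneg _) (ih i k))


end MatrixAux

section Key
variable {X : Type*} [Fintype X] [DecidableEq X] [Nonempty X]

attribute [local instance] Matrix.linftyOpSemiNormedRing Matrix.linftyOpNormedRing Matrix.linftyOpNormedAlgebra

theorem my_key (A : Matrix X X ℂ) (B : Matrix X X ℝ)
    (hB : ∀ i j, 0 ≤ B i j)
    (hoff : ∀ i j, i ≠ j → ‖(A i j)‖ ≤ B i j)
    (hdiag : ∀ i, (A i i).re = 0) (x y : X) :
    ‖((exp A) x y)‖ ≤ (exp B) x y := by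
  have ha0 : (0:ℝ) ≤ ‖A‖ := norm_nonneg A
  set a : ℝ := ‖A‖ with ha
  set K : ℝ := 2 * a ^ 2 * Real.exp a with hK
  have hK0 : 0 ≤ K := by positivity
  set J : Matrix X X ℝ := Matrix.of fun _ _ => (1:ℝ) with hJ
  set C : ℝ := K * ‖J‖ * Real.exp (‖B‖ + K * ‖J‖) with hC
  have hC0 : 0 ≤ C := by positivity
  have main : ∀ n : ℕ, 0 < n → ‖((exp A) x y)‖ ≤ (exp B) x y + C / n := by
    intro n hn
    have hN0 : (0:ℝ) < (n:ℝ) := by exact_mod_cast hn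
    have hN1 : (1:ℝ) ≤ (n:ℝ) := by exact_mod_cast hn
    have hcn0 : ((n:ℂ)) ≠ 0 := by exact_mod_cast hn.ne'
    set A' : Matrix X X ℂ := ((n : ℂ))⁻¹ • A with hA'
    set B' : Matrix X X ℝ := ((n : ℝ))⁻¹ • B with hB'def
    have hB'nonneg : ∀ i j, 0 ≤ B' i j := fun i j => by
      rw [hB'def, Matrix.smul_apply, smul_eq_mul]
      exact mul_nonneg (by positivity) (hB i j)
    have hexpA : exp A = exp A' ^ n := by
      rw [hA', ← Matrix.exp_nsmul, ← Nat.cast_smul_eq_nsmul ℂ, smul_smul,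
        mul_inv_cancel₀ hcn0, one_smul]
    have hexpB : exp B = exp B' ^ n := by
      rw [hB'def, ← Matrix.exp_nsmul, ← Nat.cast_smul_eq_nsmul ℝ, smul_smul,
        mul_inv_cancel₀ hN0.ne', one_smul]
    -- remainder
    set R : Matrix X X ℂ := exp A' - 1 - A' with hRdef
    have hexpA' : exp A' = 1 + A' + R := by rw [hRdef]; abel
    have hnormA' : ‖A'‖ = a / n := by
      rw [hA', norm_smul, norm_inv, RCLike.norm_natCast, ha, div_eq_inv_mul]
    have hA'a : ‖A'‖ ≤ a := by
      rw [hnormA']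
      exact div_le_self ha0 hN1
    have hR : ‖R‖ ≤ a ^ 2 * Real.exp a / (n:ℝ) ^ 2 := by
      refine (my_exp_remainder (𝕂 := ℂ) A').trans ?_
      rw [hnormA', div_pow, div_mul_eq_mul_div]
      gcongr
      exact div_le_self ha0 hN1
    -- entrywise bound
    set Em : Matrix X X ℝ := exp B' + (K / (n:ℝ) ^ 2) • J with hEm
    have hexpnn : ∀ i j, 0 ≤ (exp B') i j := fun i j => by
      refine le_trans ?_ (my_exp_entry_ge B' hB'nonneg i j)
      refine add_nonneg ?_ (hB'nonneg i j)
      by_cases hij : i = j <;> simp [Matrix.one_apply, hij]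
    have hE : ∀ i j, ‖((exp A') i j)‖ ≤ Em i j := by
      intro i j
      have hRij : ‖(R i j)‖ ≤ a ^ 2 * Real.exp a / (n:ℝ) ^ 2 := by
        exact (my_entry_norm_le R i j).trans hR
      have hsplit : ‖((exp A') i j)‖
          ≤ ‖((1 + A') i j)‖ + ‖(R i j)‖ := by
        rw [hexpA', Matrix.add_apply]
        exact norm_add_le _ _
      have hge := my_exp_entry_ge B' hB'nonneg i j
      have hJij : J i j = 1 := rfl
      by_cases hij : i = j
      · subst hij
        have h1A : (1 + A') i i = 1 + A' i i := by
          rw [Matrix.add_apply, Matrix.one_apply_eq]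
        have hzre : (A' i i).re = 0 := by
          rw [hA', Matrix.smul_apply, smul_eq_mul, Complex.mul_re, hdiag i, mul_zero]
          simp [Complex.inv_im]
        have hzabs : ‖(A' i i)‖ ≤ a / n := by
          rw [← hnormA']
          exact my_entry_norm_le A' i i
        have h2 : ‖((1 + A') i i)‖ ≤ 1 + (a / n) ^ 2 / 2 := by
          rw [h1A]
          refine (my_abs_one_add _ hzre).trans ?_
          have hzsq : (‖(A' i i)‖) ^ 2 ≤ (a / (n:ℝ)) ^ 2 :=
            pow_le_pow_left₀ (norm_nonneg _) hzabs 2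
          linarith
        have h3 : (1:ℝ) ≤ (exp B') i i := by
          refine le_trans ?_ hge
          rw [Matrix.one_apply_eq]
          have := hB'nonneg i i
          linarith
        have hEmii : Em i i = (exp B') i i + K / (n:ℝ) ^ 2 := by
          rw [hEm, Matrix.add_apply, Matrix.smul_apply, hJij, smul_eq_mul, mul_one]
        rw [hEmii]
        have hexpa1 : (1:ℝ) ≤ Real.exp a := Real.one_le_exp ha0
        have hn2 : (0:ℝ) < (n:ℝ) ^ 2 := by positivity
        refine (hsplit.trans (add_le_add h2 hRij)).trans ?_
        have hnum : a ^ 2 / 2 + a ^ 2 * Real.exp a ≤ K := by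
          rw [hK]; nlinarith [sq_nonneg a]
        have heq : (a / (n:ℝ)) ^ 2 / 2 + a ^ 2 * Real.exp a / (n:ℝ) ^ 2
            = (a ^ 2 / 2 + a ^ 2 * Real.exp a) / (n:ℝ) ^ 2 := by
          field_simp
        have hle2 : (a / (n:ℝ)) ^ 2 / 2 + a ^ 2 * Real.exp a / (n:ℝ) ^ 2 ≤ K / (n:ℝ) ^ 2 := by
          rw [heq]; gcongr
        linarith
      · have h1A : (1 + A') i j = A' i j := by
          rw [Matrix.add_apply, Matrix.one_apply_ne hij, zero_add]
        have h2 : ‖((1 + A') i j)‖ ≤ B' i j := by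
          rw [h1A, hA', hB'def, Matrix.smul_apply, Matrix.smul_apply, smul_eq_mul, smul_eq_mul,
            norm_mul]
          have : ‖(((n:ℂ))⁻¹)‖ = ((n:ℝ))⁻¹ := by
            rw [norm_inv, Complex.norm_natCast]
          rw [this]
          exact mul_le_mul_of_nonneg_left (hoff i j hij) (by positivity)
        have h3 : B' i j ≤ (exp B') i j := by
          refine le_trans ?_ hge
          rw [Matrix.one_apply_ne hij]
          linarith
        have hEmij : Em i j = (exp B') i j + K / (n:ℝ) ^ 2 := by
          rw [hEm, Matrix.add_apply, Matrix.smul_apply, hJij, smul_eq_mul, mul_one]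
        rw [hEmij]
        have haexp : a ^ 2 * Real.exp a / (n:ℝ) ^ 2 ≤ K / (n:ℝ) ^ 2 := by
          gcongr
          rw [hK]
          nlinarith [Real.exp_pos a, sq_nonneg a]
        refine (hsplit.trans (add_le_add h2 hRij)).trans ?_
        exact add_le_add (h3) haexp
    -- power bound
    have hpow : ‖((exp A) x y)‖ ≤ (Em ^ n) x y := by
      rw [hexpA]
      exact my_abs_pow_entry_le _ _ hE n x y
    -- compare Em ^ n with exp B
    set Qm : Matrix X X ℝ := (K / (n:ℝ) ^ 2) • J with hQm
    have hQmnorm : ‖Qm‖ = K / (n:ℝ) ^ 2 * ‖J‖ := by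
      rw [hQm, norm_smul, Real.norm_eq_abs, abs_of_nonneg (div_nonneg hK0 (by positivity))]
    set c : ℝ := Real.exp (‖B‖ / n + ‖Qm‖) with hc
    have hc1 : 1 ≤ c := Real.one_le_exp (by positivity)
    have hnormB' : ‖B'‖ = ‖B‖ / n := by
      rw [hB'def, norm_smul, Real.norm_eq_abs, abs_of_nonneg (by positivity), div_eq_inv_mul]
    have hcle : ‖exp B'‖ + ‖Qm‖ ≤ c := by
      refine le_trans (add_le_add_left ((my_norm_exp_le (𝕂 := ℝ) B').trans
        (Real.exp_le_exp.2 hnormB'.le)) _) ?_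
      exact my_exp_add_le _ _ (by positivity) (norm_nonneg _)
    have hdiffnorm : ‖Em ^ n - (exp B') ^ n‖ ≤ n * ‖Qm‖ * c ^ n := by
      rw [hEm]
      exact my_pow_diff (exp B') Qm c hc1 hcle n
    have hcpow : (n:ℝ) * ‖Qm‖ * c ^ n ≤ C / n := by
      have hcn : c ^ n = Real.exp (‖B‖ + (n:ℝ) * ‖Qm‖) := by
        rw [hc, ← Real.exp_nat_mul, mul_add, mul_div_cancel₀ _ hN0.ne']
      have hnQm : (n:ℝ) * ‖Qm‖ = K * ‖J‖ / n := by
        rw [hQmnorm]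
        field_simp [hN0.ne']
      have hKJ0 : 0 ≤ K * ‖J‖ := mul_nonneg hK0 (norm_nonneg _)
      rw [hcn, hnQm, hC]
      have hrhs : K * ‖J‖ * Real.exp (‖B‖ + K * ‖J‖) / (n:ℝ)
          = K * ‖J‖ / (n:ℝ) * Real.exp (‖B‖ + K * ‖J‖) := by ring
      rw [hrhs]
      have harg : ‖B‖ + K * ‖J‖ / (n:ℝ) ≤ ‖B‖ + K * ‖J‖ :=
        add_le_add_right (div_le_self hKJ0 hN1) _
      exact mul_le_mul_of_nonneg_left (Real.exp_le_exp.2 harg) (div_nonneg hKJ0 hN0.le)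
    have hfinal : (Em ^ n) x y ≤ (exp B) x y + C / n := by
      have hterm : (Em ^ n - (exp B') ^ n) x y ≤ C / n := by
        refine le_trans (le_abs_self _) ?_
        rw [← Real.norm_eq_abs]
        exact (my_entry_norm_le _ x y).trans (hdiffnorm.trans hcpow)
      calc (Em ^ n) x y = ((exp B') ^ n) x y + (Em ^ n - (exp B') ^ n) x y := by
            rw [Matrix.sub_apply]; ring
        _ ≤ ((exp B') ^ n) x y + C / n := add_le_add_right hterm _
        _ = (exp B) x y + C / n := by rw [← hexpB]
    exact hpow.trans hfinal
  -- conclude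
  refine le_of_forall_pos_le_add fun ε hε => ?_
  obtain ⟨n, hn⟩ := exists_nat_gt (C / ε)
  have hn0 : 0 < n := by
    by_contra h
    push_neg at h
    interval_cases n
    simp at hn
    nlinarith [div_nonneg hC0 hε.le]
  refine (main n hn0).trans (add_le_add_right ?_ _)
  rw [div_le_iff₀ (by exact_mod_cast hn0)]
  rw [div_lt_iff₀ hε] at hn
  nlinarith
end Key

end GeneralAlg
end KatoSimonAux

open Complex

noncomputable section

/-- The weighted degree function `deg(x) = (1/m(x)) ∑_y b(x,y)` on a finite weighted graph. -/
def degree {X : Type*} [Fintype X] (b : X → X → ℝ) (m : X → ℝ) (x : X) : ℝ :=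
  (∑ y, b x y) / m x

/-- The matrix of the magnetic Schrödinger operator `L_{v,θ}` on `ℓ²(X,m)`, `X` finite:
`(L_{v,θ}f)(x) = (1/m(x)) ∑_y b(x,y)(f(x) - e^{iθ(x,y)}f(y)) + v(x)f(x)`, i.e.
`L_{v,θ}f = M.mulVec f` for the matrix `M` below. -/
def magneticMatrix {X : Type*} [Fintype X] [DecidableEq X] (b : X → X → ℝ) (m : X → ℝ)
    (θ : X → X → ℝ) (v : X → ℝ) : Matrix X X ℂ := fun x y =>
  (if x = y then ((degree b m x + v x : ℝ) : ℂ) else 0)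
    - ((b x y / m x : ℝ) : ℂ) * Complex.exp (Complex.I * (θ x y))

/-- The (real) matrix of the Schrödinger operator `L_{v,0}` (no magnetic potential). -/
def schrodingerMatrix {X : Type*} [Fintype X] [DecidableEq X] (b : X → X → ℝ) (m : X → ℝ)
    (v : X → ℝ) : Matrix X X ℝ := fun x y =>
  (if x = y then degree b m x + v x else 0) - b x y / m x

/-- **Kato–Simon estimate on finite graphs**: for all `t ≥ 0` and all vertices `x,y`,
`|exp(-itL_{v,θ})(x,y)| ≤ exp(-tL_{-deg,0})(x,y)`, where the kernel of an operator `A` on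
`ℓ²(X,m)` is `A(x,y) = (Aδ_y)(x)/m(y)`. -/
theorem kato_simon_finite {X : Type*} [Fintype X] [DecidableEq X]
    (b : X → X → ℝ) (m : X → ℝ) (θ : X → X → ℝ) (v : X → ℝ)
    (hb_symm : ∀ x y, b x y = b y x) (hb_nonneg : ∀ x y, 0 ≤ b x y)
    (hb_diag : ∀ x, b x x = 0) (hm : ∀ x, 0 < m x)
    (hθ : ∀ x y, θ x y = - θ y x)
    (t : ℝ) (ht : 0 ≤ t) (x y : X) :
    ‖((NormedSpace.exp ((-(Complex.I * (t : ℂ))) • magneticMatrix b m θ v)) x y / (m y))‖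
      ≤ (NormedSpace.exp ((-t) • schrodingerMatrix b m (fun z => - degree b m z))) x y
          / m y := by
  have hne : Nonempty X := ⟨x⟩
  set M : Matrix X X ℂ := magneticMatrix b m θ v with hM
  set S : Matrix X X ℝ := schrodingerMatrix b m (fun z => - degree b m z) with hS
  set A : Matrix X X ℂ := (-(Complex.I * (t : ℂ))) • M with hA
  set B : Matrix X X ℝ := (-t) • S with hB
  have hSval : ∀ i j : X, S i j = -(b i j / m i) := by
    intro i j
    simp [hS, schrodingerMatrix]
  have hBval : ∀ i j : X, B i j = t * (b i j / m i) := by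
    intro i j
    rw [hB, Matrix.smul_apply, smul_eq_mul, hSval i j]
    ring
  have hBnn : ∀ i j : X, 0 ≤ B i j := by
    intro i j
    rw [hBval]
    exact mul_nonneg ht (div_nonneg (hb_nonneg i j) (hm i).le)
  have hoff : ∀ i j : X, i ≠ j → ‖(A i j)‖ ≤ B i j := by
    intro i j hij
    have hAij : A i j = (-(Complex.I * (t : ℂ))) * (0 -
        ((b i j / m i : ℝ) : ℂ) * Complex.exp (Complex.I * (θ i j))) := by
      rw [hA, Matrix.smul_apply, smul_eq_mul, hM]
      congr 2
      simp [magneticMatrix, hij]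
    rw [hAij, hBval]
    have hre : (Complex.I * ((θ i j : ℝ) : ℂ)).re = 0 := by
      simp [Complex.mul_re]
    simp only [zero_sub, mul_neg, norm_neg, norm_mul, Complex.norm_I,
      Complex.norm_real, Complex.norm_exp, hre, Real.exp_zero, mul_one, one_mul]
    rw [Real.norm_of_nonneg ht, Real.norm_of_nonneg (div_nonneg (hb_nonneg i j) (hm i).le)]
  have hdiag : ∀ i : X, (A i i).re = 0 := by
    intro i
    have hAii : A i i = (-(Complex.I * (t : ℂ))) * ((degree b m i + v i : ℝ) : ℂ) := by
      rw [hA, Matrix.smul_apply, smul_eq_mul, hM]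
      congr 1
      simp [magneticMatrix, hb_diag i]
    rw [hAii]
    simp [Complex.mul_re]
  have hkey := my_key A B hBnn hoff hdiag x y
  rw [norm_div, Complex.norm_real, Real.norm_of_nonneg (hm y).le]
  gcongr
  exact (hm y).le
end
end

section
/- (Semigroup domination, finite graphs) Let (X,b,m) be a weighted graph with X finite, θ a magnetic potential and v an electric potential on X. Then for all t ≥ 0 and all x,y ∈ X one has |exp(−tL_{v,θ})(x,y)| ≤ exp(−tL_{v,0})(x,y). -/
open Complex

noncomputable section

/-- Entrywise bound on powers. -/
lemma pow_entry_abs_le {X : Type*} [Fintype X] [DecidableEq X]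
    (A : Matrix X X ℂ) (S : Matrix X X ℝ) (h : ∀ x y, ‖A x y‖ ≤ S x y) :
    ∀ (n : ℕ) (x y : X), ‖(A ^ n) x y‖ ≤ (S ^ n) x y := by
  intro n
  induction n with
  | zero =>
      intro x y
      simp only [pow_zero, Matrix.one_apply]
      by_cases hxy : x = y <;> simp [hxy]
  | succ n ih =>
      intro x y
      rw [pow_succ, pow_succ, Matrix.mul_apply, Matrix.mul_apply]
      refine le_trans (norm_sum_le _ _) ?_
      refine Finset.sum_le_sum fun z _ => ?_
      rw [norm_mul]
      exact mul_le_mul (ih x z) (h z y) (norm_nonneg _)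
        (le_trans (norm_nonneg _) (ih x z))

set_option maxHeartbeats 1000000 in
/-- Entrywise domination of matrix exponentials. -/
lemma exp_entry_abs_le {X : Type*} [Fintype X] [DecidableEq X]
    (A : Matrix X X ℂ) (S : Matrix X X ℝ) (h : ∀ x y, ‖A x y‖ ≤ S x y)
    (x y : X) :
    ‖(NormedSpace.exp A) x y‖ ≤ (NormedSpace.exp S) x y := by
  letI : SeminormedRing (Matrix X X ℂ) := Matrix.linftyOpSemiNormedRing
  letI : NormedRing (Matrix X X ℂ) := Matrix.linftyOpNormedRing
  letI : NormedAlgebra ℂ (Matrix X X ℂ) := Matrix.linftyOpNormedAlgebra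
  letI : SeminormedRing (Matrix X X ℝ) := Matrix.linftyOpSemiNormedRing
  letI : NormedRing (Matrix X X ℝ) := Matrix.linftyOpNormedRing
  letI : NormedAlgebra ℝ (Matrix X X ℝ) := Matrix.linftyOpNormedAlgebra
  have hsumC : Summable fun n : ℕ => ((n.factorial : ℂ)⁻¹) • A ^ n :=
    NormedSpace.expSeries_summable' (𝕂 := ℂ) A
  have hsumR : Summable fun n : ℕ => ((n.factorial : ℝ)⁻¹) • S ^ n :=
    NormedSpace.expSeries_summable' (𝕂 := ℝ) S
  have hC1 : Summable fun n : ℕ => (((n.factorial : ℂ)⁻¹) • A ^ n) x :=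
    (Pi.summable.mp hsumC) x
  have hR1 : Summable fun n : ℕ => (((n.factorial : ℝ)⁻¹) • S ^ n) x :=
    (Pi.summable.mp hsumR) x
  have hC2 : Summable fun n : ℕ => ((n.factorial : ℂ)⁻¹) * (A ^ n) x y :=
    (Pi.summable.mp hC1) y
  have hR2 : Summable fun n : ℕ => ((n.factorial : ℝ)⁻¹) * (S ^ n) x y :=
    (Pi.summable.mp hR1) y
  have heC : NormedSpace.exp A = ∑' n : ℕ, ((n.factorial : ℂ)⁻¹) • A ^ n := by
    rw [NormedSpace.exp_eq_tsum ℂ]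
  have heR : NormedSpace.exp S = ∑' n : ℕ, ((n.factorial : ℝ)⁻¹) • S ^ n := by
    rw [NormedSpace.exp_eq_tsum ℝ]
  have hCxy : (NormedSpace.exp A) x y = ∑' n : ℕ, ((n.factorial : ℂ)⁻¹) * (A ^ n) x y := by
    rw [heC]; exact (congrFun (tsum_apply hsumC) y).trans (tsum_apply hC1)
  have hRxy : (NormedSpace.exp S) x y = ∑' n : ℕ, ((n.factorial : ℝ)⁻¹) * (S ^ n) x y := by
    rw [heR]; exact (congrFun (tsum_apply hsumR) y).trans (tsum_apply hR1)
  rw [hCxy, hRxy]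
  have hterm : ∀ n : ℕ, ‖((n.factorial : ℂ)⁻¹) * (A ^ n) x y‖
      ≤ ((n.factorial : ℝ)⁻¹) * (S ^ n) x y := by
    intro n
    rw [norm_mul]
    have h1 : ‖(n.factorial : ℂ)⁻¹‖ = (n.factorial : ℝ)⁻¹ := by
      rw [norm_inv]
      norm_num
    rw [h1]
    exact mul_le_mul_of_nonneg_left (pow_entry_abs_le A S h n x y) (by positivity)
  have habs : Summable fun n : ℕ => ‖((n.factorial : ℂ)⁻¹) * (A ^ n) x y‖ :=
    Summable.of_nonneg_of_le (fun n => norm_nonneg _) hterm hR2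
  have habs' : Summable fun n : ℕ => ‖((n.factorial : ℂ)⁻¹) * (A ^ n) x y‖ := by
    exact habs
  calc ‖∑' n : ℕ, ((n.factorial : ℂ)⁻¹) * (A ^ n) x y‖
      = ‖∑' n : ℕ, ((n.factorial : ℂ)⁻¹) * (A ^ n) x y‖ := rfl
    _ ≤ ∑' n : ℕ, ‖((n.factorial : ℂ)⁻¹) * (A ^ n) x y‖ := norm_tsum_le_tsum_norm habs'
    _ = ∑' n : ℕ, ‖((n.factorial : ℂ)⁻¹) * (A ^ n) x y‖ := rfl
    _ ≤ ∑' n : ℕ, ((n.factorial : ℝ)⁻¹) * (S ^ n) x y := Summable.tsum_le_tsum hterm habs hR2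

set_option maxHeartbeats 1000000 in
/-- **Semigroup domination on finite graphs**: for all `t ≥ 0` and all vertices `x,y`,
`|exp(-tL_{v,θ})(x,y)| ≤ exp(-tL_{v,0})(x,y)`, where the kernel of an operator `A` on
`ℓ²(X,m)` is `A(x,y) = (Aδ_y)(x)/m(y)`. -/
theorem semigroup_domination_finite {X : Type*} [Fintype X] [DecidableEq X]
    (b : X → X → ℝ) (m : X → ℝ) (θ : X → X → ℝ) (v : X → ℝ)
    (hb_symm : ∀ x y, b x y = b y x) (hb_nonneg : ∀ x y, 0 ≤ b x y)
    (hb_diag : ∀ x, b x x = 0) (hm : ∀ x, 0 < m x)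
    (hθ : ∀ x y, θ x y = - θ y x)
    (t : ℝ) (ht : 0 ≤ t) (x y : X) :
    ‖(NormedSpace.exp ((-(t : ℂ)) • magneticMatrix b m θ v)) x y / (m y)‖
      ≤ (NormedSpace.exp ((-t) • schrodingerMatrix b m v)) x y / m y := by
  letI : SeminormedRing (Matrix X X ℂ) := Matrix.linftyOpSemiNormedRing
  letI : NormedRing (Matrix X X ℂ) := Matrix.linftyOpNormedRing
  letI : NormedAlgebra ℂ (Matrix X X ℂ) := Matrix.linftyOpNormedAlgebra
  letI : SeminormedRing (Matrix X X ℝ) := Matrix.linftyOpSemiNormedRing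
  letI : NormedRing (Matrix X X ℝ) := Matrix.linftyOpNormedRing
  letI : NormedAlgebra ℝ (Matrix X X ℝ) := Matrix.linftyOpNormedAlgebra
  letI : NormedAlgebra ℚ (Matrix X X ℂ) := NormedAlgebra.restrictScalars ℚ ℂ (Matrix X X ℂ)
  letI : NormedAlgebra ℚ (Matrix X X ℝ) := NormedAlgebra.restrictScalars ℚ ℝ (Matrix X X ℝ)
  set c : ℝ := ∑ z, t * |degree b m z + v z| with hc
  have hcb : ∀ z, t * (degree b m z + v z) ≤ c := by
    intro z
    calc t * (degree b m z + v z) ≤ t * |degree b m z + v z| :=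
          mul_le_mul_of_nonneg_left (le_abs_self _) ht
      _ ≤ c := Finset.single_le_sum (f := fun z => t * |degree b m z + v z|)
          (fun i _ => by positivity) (Finset.mem_univ z)
  set A' : Matrix X X ℂ := (c : ℂ) • (1 : Matrix X X ℂ) + (-(t : ℂ)) • magneticMatrix b m θ v
    with hA'
  set S' : Matrix X X ℝ := c • (1 : Matrix X X ℝ) + (-t) • schrodingerMatrix b m v with hS'
  have hdom : ∀ x y, ‖A' x y‖ ≤ S' x y := by
    intro x y
    by_cases hxy : x = y
    · subst hxy
      have hA : A' x x = ((c - t * (degree b m x + v x) : ℝ) : ℂ) := by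
        simp only [hA', magneticMatrix, Matrix.add_apply, Matrix.smul_apply, Matrix.one_apply,
          if_pos rfl, eq_self_iff_true, if_true, hb_diag x, smul_eq_mul]
        push_cast
        ring
      have hS : S' x x = c - t * (degree b m x + v x) := by
        simp only [hS', schrodingerMatrix, Matrix.add_apply, Matrix.smul_apply, Matrix.one_apply,
          if_pos rfl, eq_self_iff_true, if_true, hb_diag x, smul_eq_mul]
        ring
      rw [hA, hS, Complex.norm_real, Real.norm_eq_abs, _root_.abs_of_nonneg (by linarith [hcb x])]
    · have hA : A' x y
          = (t : ℂ) * ((b x y / m x : ℝ) : ℂ) * Complex.exp (Complex.I * (θ x y)) := by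
        simp only [hA', magneticMatrix, Matrix.add_apply, Matrix.smul_apply, Matrix.one_apply,
          if_neg hxy, smul_eq_mul]
        ring
      have hS : S' x y = t * (b x y / m x) := by
        simp only [hS', schrodingerMatrix, Matrix.add_apply, Matrix.smul_apply, Matrix.one_apply,
          if_neg hxy, smul_eq_mul]
        ring
      rw [hA, hS, norm_mul, norm_mul]
      have hexp : ‖Complex.exp (Complex.I * (θ x y))‖ = 1 := by
        rw [mul_comm, Complex.norm_exp_ofReal_mul_I]
      rw [hexp, mul_one]
      have hbm : 0 ≤ b x y / m x := div_nonneg (hb_nonneg x y) (hm x).le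
      rw [Complex.norm_real, Complex.norm_real, Real.norm_eq_abs, Real.norm_eq_abs, _root_.abs_of_nonneg ht,
        _root_.abs_of_nonneg hbm]
  have hcomm : Commute ((-c : ℂ) • (1 : Matrix X X ℂ)) A' :=
    (Commute.one_left A').smul_left _
  have hsplitC : NormedSpace.exp ((-(t : ℂ)) • magneticMatrix b m θ v)
      = NormedSpace.exp ((-c : ℂ) • 1) * NormedSpace.exp A' := by
    refine Eq.trans ?_ (NormedSpace.exp_add_of_commute hcomm)
    congr 1
    rw [hA', ← add_assoc, ← add_smul]
    norm_num
  have hcommR : Commute ((-c) • (1 : Matrix X X ℝ)) S' :=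
    (Commute.one_left S').smul_left _
  have hsplitR : NormedSpace.exp ((-t) • schrodingerMatrix b m v)
      = NormedSpace.exp ((-c) • 1) * NormedSpace.exp S' := by
    refine Eq.trans ?_ (NormedSpace.exp_add_of_commute hcommR)
    congr 1
    rw [hS', ← add_assoc, ← add_smul]
    norm_num
  have hexpscalarC : NormedSpace.exp ((-c : ℂ) • (1 : Matrix X X ℂ))
      = Complex.exp (-c) • (1 : Matrix X X ℂ) := by
    rw [Complex.exp_eq_exp_ℂ, ← Algebra.algebraMap_eq_smul_one, ← Algebra.algebraMap_eq_smul_one]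
    exact (NormedSpace.algebraMap_exp_comm _).symm
  have hexpscalarR : NormedSpace.exp ((-c) • (1 : Matrix X X ℝ))
      = Real.exp (-c) • (1 : Matrix X X ℝ) := by
    rw [Real.exp_eq_exp_ℝ, ← Algebra.algebraMap_eq_smul_one, ← Algebra.algebraMap_eq_smul_one]
    exact (NormedSpace.algebraMap_exp_comm _).symm
  have hentC : (NormedSpace.exp ((-(t : ℂ)) • magneticMatrix b m θ v)) x y
      = Complex.exp (-c) * (NormedSpace.exp A') x y := by
    rw [hsplitC, hexpscalarC, smul_mul_assoc, one_mul, Matrix.smul_apply, smul_eq_mul]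
  have hentR : (NormedSpace.exp ((-t) • schrodingerMatrix b m v)) x y
      = Real.exp (-c) * (NormedSpace.exp S') x y := by
    rw [hsplitR, hexpscalarR, smul_mul_assoc, one_mul, Matrix.smul_apply, smul_eq_mul]
  rw [hentC, hentR, div_eq_mul_inv, div_eq_mul_inv, norm_mul, norm_mul]
  have habsexp : ‖Complex.exp (-c : ℂ)‖ = Real.exp (-c) := by
    rw [show (-c : ℂ) = ((-c : ℝ) : ℂ) by push_cast; ring, Complex.norm_exp_ofReal]
  have habsm : ‖(m y : ℂ)⁻¹‖ = (m y)⁻¹ := by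
    rw [norm_inv, Complex.norm_real, Real.norm_eq_abs, _root_.abs_of_pos (hm y)]
  rw [habsexp, habsm, mul_assoc, mul_assoc]
  refine mul_le_mul_of_nonneg_left ?_ (Real.exp_nonneg _)
  exact mul_le_mul_of_nonneg_right (exp_entry_abs_le A' S' hdom x y) (inv_nonneg.mpr (hm y).le)
end
end

section
/- Let c ∈ ℝ. The complex linear span of the family of functions {x ↦ exp(−ax) : a > 0}, viewed as elements of the space C₀([c,∞)) of continuous complex-valued functions on [c,∞) vanishing at infinity, is dense in C₀([c,∞)) with respect to the supremum norm. -/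
open Complex ZeroAtInfty Filter Topology
open scoped ContinuousMapZero

namespace SpanExpAux

noncomputable section

/-- The segment `[0,1]` viewed inside `ℂ`. -/
def S : Set ℂ := (fun r : ℝ => (r : ℂ)) '' Set.Icc 0 1

instance : Fact (0 ∈ S) := ⟨⟨0, ⟨le_refl 0, zero_le_one⟩, by simp⟩⟩

lemma h0 : ((0 : S) : ℂ) = 0 := rfl

instance : CompactSpace S :=
  isCompact_iff_compactSpace.mp (isCompact_Icc.image Complex.continuous_ofReal)

lemma mem_S {t : ℂ} (ht : t ∈ S) : t = (t.re : ℂ) ∧ 0 ≤ t.re ∧ t.re ≤ 1 := by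
  obtain ⟨r, hr, rfl⟩ := ht
  refine ⟨by simp, by simpa using hr.1, by simpa using hr.2⟩

variable (c : ℝ)

/-- The map `x ↦ exp (c - x)` from `[c, ∞)` to `S`. -/
def tau (x : Set.Ici c) : S :=
  ⟨((Real.exp (c - x) : ℝ) : ℂ),
    ⟨Real.exp (c - x), ⟨(Real.exp_pos _).le, Real.exp_le_one_iff.mpr (sub_nonpos.mpr x.2)⟩, rfl⟩⟩

lemma tau_re (x : Set.Ici c) : ((tau c x : ℂ)).re = Real.exp (c - x) :=
  Complex.ofReal_re _

lemma continuous_tau : Continuous (tau c) := by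
  apply Continuous.subtype_mk
  exact Complex.continuous_ofReal.comp
    (Real.continuous_exp.comp (continuous_const.sub continuous_subtype_val))

lemma tendsto_val_atTop : Tendsto (fun x : Set.Ici c => (x : ℝ)) (cocompact _) atTop := by
  rw [tendsto_atTop]
  intro b
  rw [Filter.hasBasis_cocompact.eventually_iff]
  refine ⟨Subtype.val ⁻¹' Set.Icc c b, ?_, ?_⟩
  · exact (Topology.IsClosedEmbedding.subtypeVal isClosed_Ici).isCompact_preimage isCompact_Icc
  · intro x hx
    simp only [Set.mem_compl_iff, Set.mem_preimage, Set.mem_Icc, not_and, not_le] at hx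
    exact (hx x.2).le

lemma tendsto_tau : Tendsto (tau c) (cocompact _) (𝓝 (0 : S)) := by
  rw [tendsto_subtype_rng]
  have h1 : Tendsto (fun x : Set.Ici c => Real.exp (c - x)) (cocompact _) (𝓝 0) := by
    apply Real.tendsto_exp_atBot.comp
    apply ((tendsto_atBot_add_const_left _ c tendsto_neg_atTop_atBot).comp
      (tendsto_val_atTop c)).congr
    intro x; simp [sub_eq_add_neg]
  have h2 := Complex.continuous_ofReal.tendsto 0
  have h3 := h2.comp h1
  simp only [Complex.ofReal_zero] at h3
  rw [h0]
  exact h3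

/-- Composition with `tau`, mapping `C(S, ℂ)₀` to `C₀([c,∞), ℂ)`. -/
def phi (f : C(S, ℂ)₀) : C₀(Set.Ici c, ℂ) where
  toFun := fun x => f (tau c x)
  continuous_toFun := (map_continuous f).comp (continuous_tau c)
  zero_at_infty' := by
    have := ((map_continuous f).tendsto (0 : S)).comp (tendsto_tau c)
    rw [map_zero f] at this
    exact this

@[simp] lemma phi_apply (f : C(S, ℂ)₀) (x : Set.Ici c) : phi c f x = f (tau c x) := rfl

lemma phi_add (f g : C(S, ℂ)₀) : phi c (f + g) = phi c f + phi c g := by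
  ext x; simp

lemma phi_mul (f g : C(S, ℂ)₀) : phi c (f * g) = phi c f * phi c g := by
  ext x; simp

lemma phi_smul (r : ℂ) (f : C(S, ℂ)₀) : phi c (r • f) = r • phi c f := by
  ext x; simp

lemma phi_zero : phi c (0 : C(S, ℂ)₀) = 0 := by
  ext x; simp

/-- The generating set of exponentials. -/
def E : Set C₀(Set.Ici c, ℂ) :=
  {g : C₀(Set.Ici c, ℂ) | ∃ a : ℝ, 0 < a ∧
    ∀ x : Set.Ici c, g x = Complex.exp (-(a : ℂ) * ((x : ℝ) : ℂ))}

lemma mul_mem_E {u v : C₀(Set.Ici c, ℂ)} (hu : u ∈ E c) (hv : v ∈ E c) : u * v ∈ E c := by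
  obtain ⟨a, ha, hga⟩ := hu
  obtain ⟨b, hb, hgb⟩ := hv
  refine ⟨a + b, add_pos ha hb, fun x => ?_⟩
  rw [ZeroAtInftyContinuousMap.mul_apply, hga, hgb, ← Complex.exp_add]
  congr 1
  push_cast
  ring

lemma mul_mem_span {u v : C₀(Set.Ici c, ℂ)} (hu : u ∈ Submodule.span ℂ (E c))
    (hv : v ∈ Submodule.span ℂ (E c)) : u * v ∈ Submodule.span ℂ (E c) := by
  induction hu using Submodule.span_induction with
  | mem u hu =>
    induction hv using Submodule.span_induction with
    | mem v hv => exact Submodule.subset_span (mul_mem_E c hu hv)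
    | zero => rw [mul_zero]; exact Submodule.zero_mem _
    | add v w _ _ ihv ihw => rw [mul_add]; exact Submodule.add_mem _ ihv ihw
    | smul r v _ ihv => rw [mul_smul_comm]; exact Submodule.smul_mem _ _ ihv
  | zero => rw [zero_mul]; exact Submodule.zero_mem _
  | add u w _ _ ihu ihw => rw [add_mul]; exact Submodule.add_mem _ ihu ihw
  | smul r u _ ihu => rw [smul_mul_assoc]; exact Submodule.smul_mem _ _ ihu

lemma id_apply (t : S) : (ContinuousMapZero.id S) t = (t : ℂ) := rfl

lemma phi_id_mem_span :
    phi c (ContinuousMapZero.id S) ∈ Submodule.span ℂ (E c) := by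
  have h1 : (Complex.exp (-(c : ℂ))) • phi c (ContinuousMapZero.id S) ∈ E c := by
    refine ⟨1, one_pos, fun x => ?_⟩
    rw [ZeroAtInftyContinuousMap.smul_apply, phi_apply, id_apply, smul_eq_mul]
    have : ((tau c x : ℂ)) = Complex.exp ((c : ℂ) - (x : ℝ)) := by
      show ((Real.exp (c - x) : ℝ) : ℂ) = _
      rw [Complex.ofReal_exp]
      push_cast
      ring_nf
    rw [this, ← Complex.exp_add]
    congr 1
    push_cast
    ring
  have h2 : phi c (ContinuousMapZero.id S) =
      (Complex.exp (c : ℂ)) • ((Complex.exp (-(c : ℂ))) • phi c (ContinuousMapZero.id S)) := by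
    rw [smul_smul, ← Complex.exp_add, add_neg_cancel, Complex.exp_zero, one_smul]
  rw [h2]
  exact Submodule.smul_mem _ _ (Submodule.subset_span h1)

lemma star_id : star (ContinuousMapZero.id S) = ContinuousMapZero.id S := by
  apply ContinuousMapZero.ext
  intro t
  show star (t : ℂ) = (t : ℂ)
  obtain ⟨ht, -, -⟩ := mem_S t.2
  rw [ht]
  exact Complex.conj_ofReal _

lemma phi_mem_span {p : C(S, ℂ)₀}
    (hp : p ∈ NonUnitalStarAlgebra.adjoin ℂ {ContinuousMapZero.id S}) :
    phi c p ∈ Submodule.span ℂ (E c) := by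
  have hp' : p ∈ NonUnitalAlgebra.adjoin ℂ
      ({ContinuousMapZero.id S} ∪ star {ContinuousMapZero.id S}) := by
    rw [← NonUnitalStarAlgebra.adjoin_toNonUnitalSubalgebra]
    exact hp
  clear hp
  induction hp' using NonUnitalAlgebra.adjoin_induction with
  | mem x hx =>
    rw [Set.star_singleton, star_id, Set.union_self, Set.mem_singleton_iff] at hx
    rw [hx]
    exact phi_id_mem_span c
  | add x y _ _ ihx ihy => rw [phi_add]; exact Submodule.add_mem _ ihx ihy
  | zero => rw [phi_zero]; exact Submodule.zero_mem _
  | mul x y _ _ ihx ihy => rw [phi_mul]; exact mul_mem_span c ihx ihy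
  | smul r x _ ihx => rw [phi_smul]; exact Submodule.smul_mem _ _ ihx

lemma sub_log_mem (t : S) : c - Real.log (t : ℂ).re ∈ Set.Ici c :=
  Set.mem_Ici.mpr (by linarith [Real.log_nonpos (mem_S t.2).2.1 (mem_S t.2).2.2])

/-- The inverse map on the level of raw functions. -/
def invFun (g : C₀(Set.Ici c, ℂ)) : S → ℂ := fun t =>
  if (0 : ℝ) < (t : ℂ).re then g ⟨c - Real.log (t : ℂ).re, sub_log_mem c t⟩ else 0

lemma invFun_pos (g : C₀(Set.Ici c, ℂ)) {t : S} (h : (0 : ℝ) < (t : ℂ).re) :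
    invFun c g t = g ⟨c - Real.log (t : ℂ).re, sub_log_mem c t⟩ := if_pos h

lemma invFun_nonpos (g : C₀(Set.Ici c, ℂ)) {t : S} (h : ¬ (0 : ℝ) < (t : ℂ).re) :
    invFun c g t = 0 := if_neg h

lemma continuous_invFun (g : C₀(Set.Ici c, ℂ)) : Continuous (invFun c g) := by
  rw [continuous_iff_continuousAt]
  intro t0
  by_cases hpos : (0 : ℝ) < (t0 : ℂ).re
  · -- positive real part: locally equal to a continuous composition
    have hU : IsOpen {t : S | (0 : ℝ) < (t : ℂ).re} :=
      isOpen_Ioi.preimage (Complex.continuous_re.comp continuous_subtype_val)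
    have hmem : {t : S | (0 : ℝ) < (t : ℂ).re} ∈ 𝓝 t0 := hU.mem_nhds hpos
    have hre : ContinuousAt (fun t : S => (t : ℂ).re) t0 :=
      (Complex.continuous_re.comp continuous_subtype_val).continuousAt
    have hlog : ContinuousAt (fun t : S => Real.log (t : ℂ).re) t0 :=
      ContinuousAt.comp (x := t0) (f := fun t : S => (t : ℂ).re) (g := Real.log)
        (Real.continuousAt_log (ne_of_gt hpos)) hre
    have hsub : ContinuousAt (fun t : S => c - Real.log (t : ℂ).re) t0 :=
      continuousAt_const.sub hlog
    have hψc : ContinuousAt (fun t : S => g ⟨c - Real.log (t : ℂ).re, sub_log_mem c t⟩) t0 :=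
      ContinuousAt.comp (x := t0)
        (f := Set.codRestrict (fun t : S => c - Real.log (t : ℂ).re) (Set.Ici c) (sub_log_mem c))
        (g := g) (map_continuous g).continuousAt (hsub.codRestrict _)
    apply hψc.congr
    filter_upwards [hmem] with t ht
    exact (invFun_pos c g ht).symm
  · -- t0 is the zero element
    have ht0 : (t0 : ℂ) = 0 := by
      have ht0re : (t0 : ℂ).re = 0 := le_antisymm (not_lt.mp hpos) (mem_S t0.2).2.1
      rw [(mem_S t0.2).1, ht0re, Complex.ofReal_zero]
    rw [Metric.continuousAt_iff]
    intro ε hε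
    have hz := Metric.tendsto_nhds.mp (zero_at_infty g) ε hε
    rw [Filter.hasBasis_cocompact.eventually_iff] at hz
    obtain ⟨K, hK, hKz⟩ := hz
    obtain ⟨M, hM⟩ := (hK.image continuous_subtype_val).bddAbove
    refine ⟨Real.exp (c - M), Real.exp_pos _, fun {t} hdist => ?_⟩
    rw [invFun_nonpos c g hpos]
    by_cases hp : (0 : ℝ) < (t : ℂ).re
    · rw [invFun_pos c g hp]
      have hxK : (⟨c - Real.log (t : ℂ).re, sub_log_mem c t⟩ : Set.Ici c) ∉ K := by
        intro hmem
        have hMx : c - Real.log (t : ℂ).re ≤ M :=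
          hM (Set.mem_image_of_mem Subtype.val hmem)
        have h1 : c - M ≤ Real.log (t : ℂ).re := by linarith
        have h2 : Real.exp (c - M) ≤ (t : ℂ).re := by
          calc Real.exp (c - M) ≤ Real.exp (Real.log (t : ℂ).re) := Real.exp_le_exp.mpr h1
          _ = (t : ℂ).re := Real.exp_log hp
        have h3 : dist t t0 = (t : ℂ).re := by
          rw [Subtype.dist_eq, ht0, Complex.dist_eq, sub_zero]
          conv_lhs => rw [(mem_S t.2).1]
          simp [Complex.norm_real, _root_.abs_of_nonneg (mem_S t.2).2.1]
        rw [h3] at hdist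
        linarith
      simpa using hKz hxK
    · rw [invFun_nonpos c g hp]
      simpa using hε

/-- The inverse construction: from `g ∈ C₀([c,∞))` build an element of `C(S, ℂ)₀`. -/
def inv (g : C₀(Set.Ici c, ℂ)) : C(S, ℂ)₀ :=
  ⟨⟨invFun c g, continuous_invFun c g⟩, by
    show invFun c g 0 = 0
    apply invFun_nonpos
    rw [h0]
    simp⟩

lemma inv_apply (g : C₀(Set.Ici c, ℂ)) (t : S) : inv c g t = invFun c g t := rfl

lemma phi_inv (g : C₀(Set.Ici c, ℂ)) : phi c (inv c g) = g := by
  ext x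
  have hx : (0 : ℝ) < ((tau c x : ℂ)).re := by
    rw [tau_re]; exact Real.exp_pos _
  rw [phi_apply, inv_apply, invFun_pos c g hx]
  congr 1
  apply Subtype.ext
  show c - Real.log ((tau c x : ℂ)).re = (x : ℝ)
  rw [tau_re, Real.log_exp]
  ring

end

end SpanExpAux

open SpanExpAux in
/-- The complex linear span of the functions `x ↦ exp(-ax)`, `a > 0`, is dense in the
Banach space `C₀([c,∞), ℂ)` of continuous functions on `[c,∞)` vanishing at infinity,
with respect to the supremum norm. -/
theorem span_exp_dense_in_C0 (c : ℝ) :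
    Dense ((Submodule.span ℂ
        {g : C₀(Set.Ici c, ℂ) | ∃ a : ℝ, 0 < a ∧
          ∀ x : Set.Ici c, g x = Complex.exp (-(a : ℂ) * ((x : ℝ) : ℂ))} :
      Submodule ℂ C₀(Set.Ici c, ℂ)) : Set C₀(Set.Ici c, ℂ)) := by
  rw [Metric.dense_iff]
  intro g r hr
  set f := SpanExpAux.inv c g with hf
  have hdense := ContinuousMapZero.adjoin_id_dense (𝕜 := ℂ) (s := S)
  have hfc : (f : C(S, ℂ)) ∈
      closure ((↑) '' ((NonUnitalStarAlgebra.adjoin ℂ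
        {ContinuousMapZero.id S} : NonUnitalStarSubalgebra ℂ C(S, ℂ)₀) : Set C(S, ℂ)₀)) := by
    apply image_closure_subset_closure_image ContinuousMapZero.isEmbedding_toContinuousMap.continuous
    exact Set.mem_image_of_mem _ (hdense f)
  rw [Metric.mem_closure_iff] at hfc
  obtain ⟨q, ⟨p, hpA, rfl⟩, hdist⟩ := hfc r hr
  refine ⟨phi c p, ?_, phi_mem_span c hpA⟩
  rw [Metric.mem_ball]
  have hle : dist (phi c p) g ≤ dist (f : C(S, ℂ)) (p : C(S, ℂ)) := by
    conv_lhs => rw [show g = phi c f from (phi_inv c g).symm]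
    rw [← ZeroAtInftyContinuousMap.dist_toBCF_eq_dist]
    refine (BoundedContinuousFunction.dist_le dist_nonneg).mpr fun x => ?_
    have := ContinuousMap.dist_apply_le_dist (f := (f : C(S, ℂ))) (g := (p : C(S, ℂ))) (tau c x)
    simpa [dist_comm] using this
  exact lt_of_le_of_lt hle hdist
end

section
/- (Mosco-type convergence, Step 1) Let c ∈ ℝ, let H and H_k (k ∈ ℕ) be complex Hilbert spaces, and let ι_k : H_k → H be bounded operators such that π_k := ι_k* satisfies π_k ι_k = id_{H_k} and sup_k ‖π_k‖ < ∞. Let L_k (on H_k) and L (on H) be bounded self-adjoint operators whose spectra are contained in [c,∞). Assume that for every a ≥ 0 and every f ∈ H one has ι_k exp(−aL_k) π_k f → exp(−aL) f in H as k → ∞. Then for every continuous function ψ : [c,∞) → ℂ vanishing at infinity and every f ∈ H one has ι_k ψ(L_k) π_k f → ψ(L) f in H as k → ∞. -/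
open Filter Topology ContinuousLinearMap

noncomputable section

/-- The continuous functional calculus `ψ(L)` of a self-adjoint bounded operator `L` (whose
spectrum is real) applied to a function `ψ` of a real variable, implemented via the
`ℂ`-functional calculus of the star-normal element `L`. -/
def cfcReal {H : Type*} [NormedAddCommGroup H] [InnerProductSpace ℂ H] [CompleteSpace H]
    (ψ : ℝ → ℂ) (L : H →L[ℂ] H) : H →L[ℂ] H :=
  cfc (fun z : ℂ => ψ z.re) L

section Auxiliary

variable {H : Type*} [NormedAddCommGroup H] [InnerProductSpace ℂ H] [CompleteSpace H]

lemma isStarNormal_smul_of_sa {z : ℂ} {M : H →L[ℂ] H} (hM : IsSelfAdjoint M) :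
    IsStarNormal (z • M) := by
  constructor
  rw [star_smul, hM.star_eq]
  show (star z • M) * (z • M) = (z • M) * (star z • M)
  rw [smul_mul_smul_comm, smul_mul_smul_comm, mul_comm z (star z)]

lemma cfcReal_exp (a : ℝ) (M : H →L[ℂ] H) (hM : IsSelfAdjoint M) :
    cfcReal (fun x : ℝ => Complex.exp (-(a : ℂ) * x)) M
      = NormedSpace.exp ((-(a : ℂ)) • M) := by
  have hn : IsStarNormal M := hM.isStarNormal
  have h1 : cfc (fun z : ℂ => Complex.exp (-(a : ℂ) * (z.re : ℂ))) M
      = cfc (fun z : ℂ => Complex.exp (-(a : ℂ) * z)) M := by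
    refine cfc_congr fun z hz => ?_
    have h : ((z.re : ℝ) : ℂ) = z := hM.spectrumRestricts.rightInvOn hz
    rw [h]
  have h2 : cfc (fun z : ℂ => Complex.exp (-(a : ℂ) * z)) M
      = cfc Complex.exp ((-(a : ℂ)) • M) := by
    rw [show (fun z : ℂ => Complex.exp (-(a : ℂ) * z))
        = Complex.exp ∘ (fun z : ℂ => -(a : ℂ) * z) from rfl,
      cfc_comp Complex.exp (fun z : ℂ => -(a : ℂ) * z) M hn
        (Complex.continuous_exp.continuousOn) ((continuous_const.mul continuous_id).continuousOn),
      show (fun z : ℂ => -(a : ℂ) * z) = ((-(a:ℂ)) * ·) from rfl, cfc_const_mul_id _ M hn]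
  have hsn : IsStarNormal ((-(a : ℂ)) • M) := isStarNormal_smul_of_sa hM
  rw [cfcReal, h1, h2, CFC.complex_exp_eq_normedSpace_exp]

lemma norm_cfcReal_le {c ε : ℝ} (hε : 0 ≤ ε) (ψ : ℝ → ℂ) (M : H →L[ℂ] H)
    (hM : IsSelfAdjoint M) (hspec : spectrum ℝ M ⊆ Set.Ici c)
    (h : ∀ x ∈ Set.Ici c, ‖ψ x‖ ≤ ε) : ‖cfcReal ψ M‖ ≤ ε := by
  have hn : IsStarNormal M := hM.isStarNormal
  exact norm_cfc_le hε fun z hz => h z.re (hspec (hM.spectrumRestricts.apply_mem hz))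

lemma continuousOn_comp_re {c : ℝ} {ψ : ℝ → ℂ} (hψ : ContinuousOn ψ (Set.Ici c))
    {M : H →L[ℂ] H} (hM : IsSelfAdjoint M) (hspec : spectrum ℝ M ⊆ Set.Ici c) :
    ContinuousOn (fun z : ℂ => ψ z.re) (spectrum ℂ M) :=
  hψ.comp Complex.continuous_re.continuousOn
    (fun z hz => hspec (hM.spectrumRestricts.apply_mem hz))

lemma norm_cfcReal_sub_le {c ε : ℝ} (hε : 0 ≤ ε) (ψ g : ℝ → ℂ) (M : H →L[ℂ] H)
    (hM : IsSelfAdjoint M) (hspec : spectrum ℝ M ⊆ Set.Ici c)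
    (hψ : ContinuousOn ψ (Set.Ici c)) (hg : ContinuousOn g (Set.Ici c))
    (h : ∀ x ∈ Set.Ici c, ‖ψ x - g x‖ ≤ ε) : ‖cfcReal ψ M - cfcReal g M‖ ≤ ε := by
  have hn : IsStarNormal M := hM.isStarNormal
  rw [cfcReal, cfcReal, ← cfc_sub _ _ M (continuousOn_comp_re hψ hM hspec)
    (continuousOn_comp_re hg hM hspec)]
  exact norm_cfcReal_le hε (fun x => ψ x - g x) M hM hspec h

lemma cfcReal_sum_exp (N : ℕ) (A : ℕ → ℂ) (M : H →L[ℂ] H) (hM : IsSelfAdjoint M) :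
    cfcReal (fun x : ℝ => ∑ n ∈ Finset.range N, A n * Complex.exp (-((n : ℝ) : ℂ) * x)) M
      = ∑ n ∈ Finset.range N, A n • NormedSpace.exp ((-((n : ℝ) : ℂ)) • M) := by
  have hn : IsStarNormal M := hM.isStarNormal
  have hcont : ∀ n : ℕ, ContinuousOn (fun z : ℂ => A n * Complex.exp (-((n : ℝ) : ℂ) * (z.re : ℂ)))
      (spectrum ℂ M) := by
    intro n
    exact (continuous_const.mul (Complex.continuous_exp.comp
      (continuous_const.mul (Complex.continuous_ofReal.comp Complex.continuous_re)))).continuousOn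
  calc cfcReal (fun x : ℝ => ∑ n ∈ Finset.range N, A n * Complex.exp (-((n : ℝ) : ℂ) * x)) M
      = cfc (∑ n ∈ Finset.range N,
          fun z : ℂ => A n * Complex.exp (-((n : ℝ) : ℂ) * (z.re : ℂ))) M := by
        rw [cfcReal]
        congr 1
        funext z
        simp [Finset.sum_apply]
    _ = ∑ n ∈ Finset.range N,
          cfc (fun z : ℂ => A n * Complex.exp (-((n : ℝ) : ℂ) * (z.re : ℂ))) M :=
        cfc_sum _ M _ (fun n _ => hcont n)
    _ = ∑ n ∈ Finset.range N, A n • NormedSpace.exp ((-((n : ℝ) : ℂ)) • M) := by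
        refine Finset.sum_congr rfl fun n _ => ?_
        rw [show (fun z : ℂ => A n * Complex.exp (-((n : ℝ) : ℂ) * (z.re : ℂ)))
            = (fun z : ℂ => A n • Complex.exp (-((n : ℝ) : ℂ) * (z.re : ℂ))) from rfl,
          cfc_smul (A n) _ M (by
            exact (Complex.continuous_exp.comp (continuous_const.mul
              (Complex.continuous_ofReal.comp Complex.continuous_re))).continuousOn)]
        congr 1
        exact cfcReal_exp ((n : ℝ)) M hM

end Auxiliary

lemma approx_exp (c : ℝ) (ψ : ℝ → ℂ) (hcont : ContinuousOn ψ (Set.Ici c))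
    (h0 : Tendsto ψ atTop (𝓝 0)) {ε : ℝ} (hε : 0 < ε) :
    ∃ (N : ℕ) (A : ℕ → ℂ), ∀ x ∈ Set.Ici c,
      ‖ψ x - ∑ n ∈ Finset.range N, A n * Complex.exp (-((n : ℝ) : ℂ) * x)‖ ≤ ε := by
  classical
  set u : ℝ → ℂ := fun t => if t ≤ 0 then 0 else ψ (c - Real.log t) with hu
  have hmaps : Set.MapsTo (fun t : ℝ => c - Real.log t) (Set.Icc 0 1) (Set.Ici c) := by
    intro t ht
    have : Real.log t ≤ 0 := Real.log_nonpos ht.1 ht.2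
    simp only [Set.mem_Ici]; linarith
  have hucont : ContinuousOn u (Set.Icc 0 1) := by
    intro t ht
    rcases eq_or_lt_of_le ht.1 with h|h
    · -- t = 0
      rw [ContinuousWithinAt, ← h]
      have hu0 : u 0 = 0 := by simp [hu]
      rw [hu0, show Set.Icc (0:ℝ) 1 = insert 0 (Set.Ioc 0 1) from
        (Set.Ioc_insert_left zero_le_one).symm, nhdsWithin_insert, tendsto_sup]
      constructor
      · rw [tendsto_pure_left]
        intro s hs
        simpa [hu] using mem_of_mem_nhds hs
      · have hlog : Tendsto Real.log (𝓝[Set.Ioc 0 1] 0) atBot :=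
          Real.tendsto_log_nhdsGT_zero.mono_left
            (nhdsWithin_mono _ (fun s hs => hs.1))
        have h1 : Tendsto (fun t : ℝ => c - Real.log t) (𝓝[Set.Ioc 0 1] 0) atTop := by
          have := (tendsto_neg_atBot_atTop).comp hlog
          have h2 := tendsto_atTop_add_const_left _ c this
          exact h2.congr (fun t => by simp [Function.comp, sub_eq_add_neg])
        have h3 : Tendsto (fun t : ℝ => ψ (c - Real.log t)) (𝓝[Set.Ioc 0 1] 0) (𝓝 0) :=
          h0.comp h1
        refine h3.congr' ?_
        filter_upwards [self_mem_nhdsWithin] with s hs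
        simp [hu, not_le.2 hs.1]
    · -- t > 0
      have hinner : ContinuousWithinAt (fun t : ℝ => c - Real.log t) (Set.Icc 0 1) t :=
        (continuousAt_const.sub (Real.continuousAt_log h.ne')).continuousWithinAt
      have hv : ContinuousWithinAt (fun t : ℝ => ψ (c - Real.log t)) (Set.Icc 0 1) t :=
        ContinuousWithinAt.comp (g := ψ) (hcont _ (hmaps ht)) hinner hmaps
      refine hv.congr_of_eventuallyEq ?_ (by simp [hu, not_le.2 h])
      filter_upwards [mem_nhdsWithin_of_mem_nhds (Ioi_mem_nhds h)] with s hs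
      simp [hu, not_le.2 (show (0:ℝ) < s from hs)]
  -- apply Weierstrass to real and imaginary parts
  have hre : ContinuousOn (fun t => (u t).re) (Set.Icc 0 1) :=
    Complex.continuous_re.comp_continuousOn hucont
  have him : ContinuousOn (fun t => (u t).im) (Set.Icc 0 1) :=
    Complex.continuous_im.comp_continuousOn hucont
  obtain ⟨p, hp⟩ := exists_polynomial_near_of_continuousOn 0 1 _ hre (ε/2) (by linarith)
  obtain ⟨q, hq⟩ := exists_polynomial_near_of_continuousOn 0 1 _ him (ε/2) (by linarith)
  set N := max p.natDegree q.natDegree + 1 with hN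
  refine ⟨N, fun n => ((p.coeff n : ℂ) + (q.coeff n : ℂ) * Complex.I)
    * Complex.exp ((n : ℂ) * c), ?_⟩
  intro x hx
  set t : ℝ := Real.exp (c - x) with htdef
  have ht0 : 0 < t := Real.exp_pos _
  have ht : t ∈ Set.Icc (0:ℝ) 1 :=
    ⟨ht0.le, Real.exp_le_one_iff.2 (by simpa using hx)⟩
  have hut : u t = ψ x := by
    simp [hu, htdef, not_le.2 ht0, not_le.2 (Real.exp_pos (c - x)), Real.log_exp, sub_sub_cancel]
  -- rewrite the sum
  have hterm : ∀ n : ℕ, ((p.coeff n : ℂ) + (q.coeff n : ℂ) * Complex.I)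
      * Complex.exp ((n : ℂ) * c) * Complex.exp (-((n : ℝ) : ℂ) * x)
      = (p.coeff n : ℂ) * (t ^ n : ℝ) + ((q.coeff n : ℂ) * (t ^ n : ℝ)) * Complex.I := by
    intro n
    have h1 : ((t ^ n : ℝ) : ℂ) = Complex.exp ((n : ℂ) * c) * Complex.exp (-((n : ℝ) : ℂ) * x) := by
      rw [htdef, ← Real.exp_nat_mul, Complex.ofReal_exp, ← Complex.exp_add]
      push_cast
      ring_nf
    rw [h1]; ring
  have hsum : ∑ n ∈ Finset.range N, ((p.coeff n : ℂ) + (q.coeff n : ℂ) * Complex.I)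
      * Complex.exp ((n : ℂ) * c) * Complex.exp (-((n : ℝ) : ℂ) * x)
      = (p.eval t : ℝ) + (q.eval t : ℝ) * Complex.I := by
    rw [Finset.sum_congr rfl (fun n _ => hterm n), Finset.sum_add_distrib, ← Finset.sum_mul]
    have hpe : p.eval t = ∑ n ∈ Finset.range N, p.coeff n * t ^ n :=
      Polynomial.eval_eq_sum_range' (lt_of_le_of_lt (le_max_left _ _) (Nat.lt_succ_self _)) t
    have hqe : q.eval t = ∑ n ∈ Finset.range N, q.coeff n * t ^ n :=
      Polynomial.eval_eq_sum_range' (lt_of_le_of_lt (le_max_right _ _) (Nat.lt_succ_self _)) t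
    rw [hpe, hqe]
    push_cast
    ring
  calc ‖ψ x - ∑ n ∈ Finset.range N, ((p.coeff n : ℂ) + (q.coeff n : ℂ) * Complex.I)
      * Complex.exp ((n : ℂ) * c) * Complex.exp (-((n : ℝ) : ℂ) * x)‖
      = ‖((ψ x).re - p.eval t : ℝ) + ((ψ x).im - q.eval t : ℝ) * Complex.I‖ := by
        rw [hsum]
        congr 1
        have hsplit := (Complex.re_add_im (ψ x)).symm
        nth_rewrite 1 [hsplit]
        push_cast
        ring
    _ ≤ |(ψ x).re - p.eval t| + |(ψ x).im - q.eval t| := by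
        refine le_trans (Complex.norm_le_abs_re_add_abs_im _) ?_
        simp
    _ ≤ ε := by
        have h1 := hp t ht
        have h2 := hq t ht
        rw [← hut]
        rw [abs_sub_comm] at h1
        rw [abs_sub_comm] at h2
        linarith

/-- **Mosco-type convergence, Step 1.** If `ι_k exp(-aL_k) π_k → exp(-aL)` strongly for all
`a ≥ 0`, then `ι_k ψ(L_k) π_k → ψ(L)` strongly for every continuous `ψ : [c,∞) → ℂ`
vanishing at infinity. -/
theorem mosco_step1 (c : ℝ)
    {H : Type*} [NormedAddCommGroup H] [InnerProductSpace ℂ H] [CompleteSpace H]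
    {Hk : ℕ → Type*} [∀ k, NormedAddCommGroup (Hk k)] [∀ k, InnerProductSpace ℂ (Hk k)]
    [∀ k, CompleteSpace (Hk k)]
    (ι : ∀ k, Hk k →L[ℂ] H)
    (hπι : ∀ k, (adjoint (ι k)).comp (ι k) = ContinuousLinearMap.id ℂ (Hk k))
    (hπbd : ∃ C : ℝ, ∀ k, ‖adjoint (ι k)‖ ≤ C)
    (Lk : ∀ k, Hk k →L[ℂ] Hk k) (L : H →L[ℂ] H)
    (hLk_sa : ∀ k, IsSelfAdjoint (Lk k)) (hL_sa : IsSelfAdjoint L)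
    (hLk_spec : ∀ k, spectrum ℝ (Lk k) ⊆ Set.Ici c) (hL_spec : spectrum ℝ L ⊆ Set.Ici c)
    (hsemigroup : ∀ a : ℝ, 0 ≤ a → ∀ f : H,
      Tendsto (fun k => ι k (NormedSpace.exp ((-(a : ℂ)) • Lk k) (adjoint (ι k) f)))
        atTop (𝓝 (NormedSpace.exp ((-(a : ℂ)) • L) f))) :
    ∀ ψ : ℝ → ℂ, ContinuousOn ψ (Set.Ici c) → Tendsto ψ atTop (𝓝 0) →
      ∀ f : H,
        Tendsto (fun k => ι k (cfcReal ψ (Lk k) (adjoint (ι k) f)))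
          atTop (𝓝 (cfcReal ψ L f)) := by
  intro ψ hψcont hψ0 f
  obtain ⟨C, hC⟩ := hπbd
  have hC0 : 0 ≤ C := le_trans (norm_nonneg _) (hC 0)
  -- the maps ι k are isometries
  have hiso : ∀ k (x : Hk k), ‖ι k x‖ = ‖x‖ := by
    intro k x
    have hadj : adjoint (ι k) (ι k x) = x := by
      have := DFunLike.congr_fun (hπι k) x
      simpa using this
    have h1 : (inner ℂ x x : ℂ) = inner ℂ (ι k x) (ι k x) := by
      rw [← adjoint_inner_right (ι k) x (ι k x), hadj]
    have h2 : ‖ι k x‖ ^ 2 = ‖x‖ ^ 2 := by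
      rw [← inner_self_eq_norm_sq (𝕜 := ℂ), ← inner_self_eq_norm_sq (𝕜 := ℂ), h1]
    calc ‖ι k x‖ = Real.sqrt (‖ι k x‖ ^ 2) := (Real.sqrt_sq (norm_nonneg _)).symm
      _ = Real.sqrt (‖x‖ ^ 2) := by rw [h2]
      _ = ‖x‖ := Real.sqrt_sq (norm_nonneg _)
  rw [Metric.tendsto_nhds]
  intro ε hε
  set ε' := ε / (4 * (C + 1) * (‖f‖ + 1)) with hε'def
  have hεpos' : 0 < ε' := by
    apply div_pos hε
    positivity
  obtain ⟨N, A, hA⟩ := approx_exp c ψ hψcont hψ0 hεpos'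
  set g : ℝ → ℂ := fun x => ∑ n ∈ Finset.range N, A n * Complex.exp (-((n : ℝ) : ℂ) * x)
    with hgdef
  have hgcont : Continuous g := by
    apply continuous_finset_sum
    intro n _
    exact continuous_const.mul (Complex.continuous_exp.comp
      (continuous_const.mul Complex.continuous_ofReal))
  -- convergence for g
  have hmid : Tendsto (fun k => ι k (cfcReal g (Lk k) (adjoint (ι k) f))) atTop
      (𝓝 (cfcReal g L f)) := by
    have hrwk : ∀ k, ι k (cfcReal g (Lk k) (adjoint (ι k) f))
        = ∑ n ∈ Finset.range N,
            A n • ι k (NormedSpace.exp ((-((n : ℝ) : ℂ)) • Lk k) (adjoint (ι k) f)) := by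
      intro k
      rw [hgdef, cfcReal_sum_exp N A (Lk k) (hLk_sa k)]
      rw [ContinuousLinearMap.sum_apply]
      rw [map_sum]
      refine Finset.sum_congr rfl fun n _ => ?_
      rw [ContinuousLinearMap.smul_apply, map_smul]
    have hrwL : cfcReal g L f = ∑ n ∈ Finset.range N,
        A n • NormedSpace.exp ((-((n : ℝ) : ℂ)) • L) f := by
      rw [hgdef, cfcReal_sum_exp N A L hL_sa, ContinuousLinearMap.sum_apply]
      refine Finset.sum_congr rfl fun n _ => ?_
      rw [ContinuousLinearMap.smul_apply]
    simp only [hrwk, hrwL]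
    apply tendsto_finset_sum
    intro n _
    exact (hsemigroup ((n : ℝ)) (Nat.cast_nonneg n) f).const_smul (A n)
  have hmid' := Metric.tendsto_nhds.mp hmid (ε / 2) (by linarith)
  filter_upwards [hmid'] with k hk
  -- decompose and estimate
  have hXY : ‖ι k (cfcReal ψ (Lk k) (adjoint (ι k) f))
      - ι k (cfcReal g (Lk k) (adjoint (ι k) f))‖ ≤ ε' * (C * ‖f‖) := by
    rw [← map_sub (ι k), hiso k]
    have h1 : cfcReal ψ (Lk k) (adjoint (ι k) f) - cfcReal g (Lk k) (adjoint (ι k) f)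
        = (cfcReal ψ (Lk k) - cfcReal g (Lk k)) (adjoint (ι k) f) := by
      rw [ContinuousLinearMap.sub_apply]
    rw [h1]
    calc ‖(cfcReal ψ (Lk k) - cfcReal g (Lk k)) (adjoint (ι k) f)‖
        ≤ ‖cfcReal ψ (Lk k) - cfcReal g (Lk k)‖ * ‖adjoint (ι k) f‖ := le_opNorm _ _
      _ ≤ ε' * (C * ‖f‖) := by
          apply mul_le_mul
          · exact norm_cfcReal_sub_le hεpos'.le ψ g (Lk k) (hLk_sa k) (hLk_spec k)
              hψcont hgcont.continuousOn (fun x hx => hA x hx)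
          · exact le_trans (le_opNorm _ _) (mul_le_mul_of_nonneg_right (hC k) (norm_nonneg f))
          · exact norm_nonneg _
          · exact hεpos'.le
  have hZW : ‖cfcReal g L f - cfcReal ψ L f‖ ≤ ε' * ‖f‖ := by
    have h1 : cfcReal g L f - cfcReal ψ L f = (cfcReal g L - cfcReal ψ L) f := by
      rw [ContinuousLinearMap.sub_apply]
    rw [h1]
    calc ‖(cfcReal g L - cfcReal ψ L) f‖ ≤ ‖cfcReal g L - cfcReal ψ L‖ * ‖f‖ := le_opNorm _ _
      _ ≤ ε' * ‖f‖ := by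
          apply mul_le_mul_of_nonneg_right _ (norm_nonneg f)
          exact norm_cfcReal_sub_le hεpos'.le g ψ L hL_sa hL_spec hgcont.continuousOn hψcont
            (fun x hx => by rw [norm_sub_rev]; exact hA x hx)
  have harith : ε' * (C * ‖f‖) + ε' * ‖f‖ ≤ ε / 2 := by
    have hD : 0 < 4 * (C + 1) * (‖f‖ + 1) := by positivity
    have h1 : ε' * (C * ‖f‖) + ε' * ‖f‖ = ε' * ((C + 1) * ‖f‖) := by ring
    have h2 : ε' * ((C + 1) * ‖f‖) ≤ ε' * ((C + 1) * (‖f‖ + 1)) := by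
      apply mul_le_mul_of_nonneg_left _ hεpos'.le
      apply mul_le_mul_of_nonneg_left _ (by linarith)
      linarith
    have h3 : ε' * ((C + 1) * (‖f‖ + 1)) = ε / 4 := by
      rw [hε'def]
      field_simp
    linarith
  rw [dist_eq_norm]
  calc ‖ι k (cfcReal ψ (Lk k) (adjoint (ι k) f)) - cfcReal ψ L f‖
      ≤ ‖ι k (cfcReal ψ (Lk k) (adjoint (ι k) f))
          - ι k (cfcReal g (Lk k) (adjoint (ι k) f))‖
        + ‖ι k (cfcReal g (Lk k) (adjoint (ι k) f)) - cfcReal g L f‖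
        + ‖cfcReal g L f - cfcReal ψ L f‖ := by
          have := norm_add₃_le (a := ι k (cfcReal ψ (Lk k) (adjoint (ι k) f))
              - ι k (cfcReal g (Lk k) (adjoint (ι k) f)))
            (b := ι k (cfcReal g (Lk k) (adjoint (ι k) f)) - cfcReal g L f)
            (c := cfcReal g L f - cfcReal ψ L f)
          simpa using this
    _ < ε' * (C * ‖f‖) + ε / 2 + ε' * ‖f‖ := by
        have hk' : ‖ι k (cfcReal g (Lk k) (adjoint (ι k) f)) - cfcReal g L f‖ < ε / 2 := by
          rw [← dist_eq_norm]; exact hk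
        have := add_lt_add_of_le_of_lt hXY hk'
        linarith [hZW]
    _ ≤ ε := by linarith
end
end

section
/- Let (X,b,m) be a weighted graph, θ a magnetic potential and v an electric potential on X. Then L̃_{v,θ}[C_c(X)] ⊆ ℓ²(X,m) if and only if ∑_{y∈X} b(x,y)²/m(y) < ∞ for every x ∈ X. In particular, this condition is independent of the choice of v and θ. -/
open Complex

/-- ℓ² (with weight) is closed under addition. -/
lemma l2w_add {X : Type*} {m : X → ℝ} (hm : ∀ x, 0 ≤ m x) {u w : X → ℂ}
    (hu : Summable fun x => ‖u x‖ ^ 2 * m x) (hw : Summable fun x => ‖w x‖ ^ 2 * m x) :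
    Summable fun x => ‖u x + w x‖ ^ 2 * m x := by
  refine Summable.of_nonneg_of_le (fun x => mul_nonneg (by positivity) (hm x)) (fun x => ?_)
    (((hu.mul_left 2).add (hw.mul_left 2)))
  have h1 := norm_add_le (u x) (w x)
  have h2 : ‖u x + w x‖ ^ 2 ≤ 2 * ‖u x‖ ^ 2 + 2 * ‖w x‖ ^ 2 := by
    nlinarith [sq_nonneg (‖u x‖ - ‖w x‖), norm_nonneg (u x + w x), norm_nonneg (u x),
      norm_nonneg (w x)]
  have := mul_le_mul_of_nonneg_right h2 (hm x)
  linarith [this]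

lemma l2w_sum {X ι : Type*} {m : X → ℝ} (hm : ∀ x, 0 ≤ m x) (s : Finset ι) (C : ι → X → ℂ)
    (h : ∀ i ∈ s, Summable fun x => ‖C i x‖ ^ 2 * m x) :
    Summable fun x => ‖∑ i ∈ s, C i x‖ ^ 2 * m x := by
  classical
  induction s using Finset.induction with
  | empty => simpa using summable_zero
  | @insert a s ha ih =>
    have h1 := h a (Finset.mem_insert_self a s)
    have h2 := ih (fun i hi => h i (Finset.mem_insert_of_mem hi))
    have := l2w_add hm h1 h2
    refine this.congr fun x => ?_
    rw [Finset.sum_insert ha]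

/-- `L̃_{v,θ}` maps `C_c(X)` into `ℓ²(X,m)` if and only if `∑_y b(x,y)²/m(y) < ∞` for all
`x ∈ X`; in particular this condition is independent of the potentials `v` and `θ`. -/
theorem magneticSchrodingerOp_maps_compactlySupported_into_l2_iff {X : Type*} [Countable X]
    (b : X → X → ℝ) (m : X → ℝ) (θ : X → X → ℝ) (v : X → ℝ)
    (hb_symm : ∀ x y, b x y = b y x) (hb_nonneg : ∀ x y, 0 ≤ b x y)
    (hb_diag : ∀ x, b x x = 0) (hb_sum : ∀ x, Summable fun y => b x y)
    (hm : ∀ x, 0 < m x) (hθ : ∀ x y, θ x y = - θ y x) :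
    (∀ f : X → ℂ, (Function.support f).Finite →
        Summable fun x => ‖magneticSchrodingerOp b m θ v f x‖ ^ 2 * m x)
      ↔ ∀ x, Summable fun y => (b x y) ^ 2 / m y := by
  classical
  constructor
  · intro h x₀
    set f : X → ℂ := fun y => if y = x₀ then (1 : ℂ) else 0 with hf_def
    have hf : (Function.support f).Finite := by
      apply Set.Finite.subset (Set.finite_singleton x₀)
      intro y hy
      simp only [Function.mem_support, hf_def] at hy
      by_contra hne
      simp only [Set.mem_singleton_iff] at hne
      simp [hne] at hy
    have hsum := h f hf
    set g : X → ℝ := fun x => ‖magneticSchrodingerOp b m θ v f x‖ ^ 2 * m x with hg_def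
    have hgval : ∀ x, x ≠ x₀ → g x = b x x₀ ^ 2 / m x := by
      intro x hx
      have hT : (∑' y, (b x y : ℂ) * (f x - Complex.exp (Complex.I * (θ x y)) * f y))
          = -(b x x₀ * Complex.exp (Complex.I * (θ x x₀))) := by
        rw [tsum_eq_single x₀]
        · simp [hf_def, hx]
        · intro y hy
          simp [hf_def, hy, hx]
      have hL : magneticSchrodingerOp b m θ v f x
          = (m x)⁻¹ * (-(b x x₀ * Complex.exp (Complex.I * (θ x x₀)))) := by
        rw [magneticSchrodingerOp]
        rw [hT]
        simp [hf_def, hx]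
      have hexp : ‖Complex.exp (Complex.I * (θ x x₀ : ℝ))‖ = 1 := by
        rw [Complex.norm_exp]; simp
      have hnorm : ‖magneticSchrodingerOp b m θ v f x‖ = (m x)⁻¹ * b x x₀ := by
        rw [hL, norm_mul, norm_neg, norm_mul, hexp, mul_one]
        simp only [Complex.norm_real, Real.norm_eq_abs]
        rw [_root_.abs_of_nonneg (inv_nonneg.mpr (hm x).le),
          _root_.abs_of_nonneg (hb_nonneg x x₀)]
      rw [hg_def]
      simp only [hnorm]
      have hmx := (hm x).ne'
      field_simp
    have hd : Summable (fun x => if x = x₀ then -(g x₀) else 0) := by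
      apply summable_of_ne_finset_zero (s := {x₀})
      intro x hx
      simp only [Finset.mem_singleton] at hx
      simp [hx]
    refine (hsum.add hd).congr fun x => ?_
    by_cases hx : x = x₀
    · rw [hx]
      simp [hb_diag]
    · rw [hb_symm x₀ x, ← hgval x hx]
      simp [hx]
  · intro h f hf
    set S := hf.toFinset with hS_def
    set A : X → ℂ := fun x =>
      (m x)⁻¹ * ((∑' y, (b x y : ℂ)) * f x) + (v x) * f x with hA_def
    set C : X → X → ℂ := fun y x =>
      -((m x)⁻¹ * ((b x y : ℂ) * Complex.exp (Complex.I * (θ x y)) * f y)) with hC_def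
    have hdecomp : ∀ x, magneticSchrodingerOp b m θ v f x = A x + ∑ y ∈ S, C y x := by
      intro x
      have hs1 : Summable fun y => (b x y : ℂ) * f x :=
        (Complex.summable_ofReal.mpr (hb_sum x)).mul_right (f x)
      have hs2 : Summable fun y => (b x y : ℂ) * (Complex.exp (Complex.I * (θ x y)) * f y) := by
        apply summable_of_ne_finset_zero (s := S)
        intro y hy
        have : f y = 0 := by
          by_contra hne
          exact hy (hf.mem_toFinset.mpr hne)
        simp [this]
      have hT : (∑' y, (b x y : ℂ) * (f x - Complex.exp (Complex.I * (θ x y)) * f y))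
          = (∑' y, (b x y : ℂ)) * f x
            - ∑ y ∈ S, (b x y : ℂ) * (Complex.exp (Complex.I * (θ x y)) * f y) := by
        calc (∑' y, (b x y : ℂ) * (f x - Complex.exp (Complex.I * (θ x y)) * f y))
            = ∑' y, ((b x y : ℂ) * f x
                - (b x y : ℂ) * (Complex.exp (Complex.I * (θ x y)) * f y)) := by
              apply tsum_congr; intro y; ring
          _ = (∑' y, (b x y : ℂ) * f x)
              - ∑' y, (b x y : ℂ) * (Complex.exp (Complex.I * (θ x y)) * f y) :=
              Summable.tsum_sub hs1 hs2
          _ = (∑' y, (b x y : ℂ)) * f x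
              - ∑ y ∈ S, (b x y : ℂ) * (Complex.exp (Complex.I * (θ x y)) * f y) := by
              rw [tsum_mul_right]
              congr 1
              apply tsum_eq_sum
              intro y hy
              have : f y = 0 := by
                by_contra hne
                exact hy (hf.mem_toFinset.mpr hne)
              simp [this]
      rw [magneticSchrodingerOp, hT]
      have hQ : ∑ y ∈ S, (b x y : ℂ) * (Complex.exp (Complex.I * (θ x y)) * f y)
          = ∑ y ∈ S, (b x y : ℂ) * Complex.exp (Complex.I * (θ x y)) * f y :=
        Finset.sum_congr rfl fun y _ => by ring
      rw [hQ, hA_def]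
      simp only [hC_def]
      rw [Finset.sum_neg_distrib, ← Finset.mul_sum]
      ring
    have hmpos : ∀ x, 0 ≤ m x := fun x => (hm x).le
    have key : Summable fun x => ‖A x + ∑ y ∈ S, C y x‖ ^ 2 * m x := ?_
    · exact key.congr fun x => by rw [hdecomp x]
    apply l2w_add hmpos
    · apply summable_of_ne_finset_zero (s := S)
      intro x hx
      have hfx : f x = 0 := by
        by_contra hne
        exact hx (hf.mem_toFinset.mpr hne)
      simp [hA_def, hfx]
    · apply l2w_sum hmpos
      intro y _
      have hbase : Summable fun x => ‖f y‖ ^ 2 * (b y x ^ 2 / m x) := (h y).mul_left _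
      refine hbase.congr fun x => ?_
      have hexp : ‖Complex.exp (Complex.I * (θ x y : ℝ))‖ = 1 := by
        rw [Complex.norm_exp]; simp
      have hnorm : ‖C y x‖ = (m x)⁻¹ * (b x y * ‖f y‖) := by
        simp only [hC_def]
        rw [norm_neg, norm_mul, norm_mul, norm_mul, hexp, mul_one]
        simp only [Complex.norm_real, Real.norm_eq_abs]
        rw [_root_.abs_of_nonneg (inv_nonneg.mpr (hm x).le),
          _root_.abs_of_nonneg (hb_nonneg x y)]
      rw [hnorm, hb_symm y x]
      have hmx := (hm x).ne'
      field_simp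
end
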